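/- arXiv:2103.10589 — 6 statements merged into one kernel-verified Lean document; each statement's English description precedes it below -/
import Mathlib

section
/- Let n ≥ 3 be an integer, c ∈ ℝ with c ≠ 0, λ > 0 and x₀ ∈ ℝⁿ, and define v(x) = c (λ/(λ² + |x − x₀|²))^{(n−2)/2}. Then v attains equality in the sharp Sobolev inequality: (∫_{ℝⁿ} |v|^{2*} dx)^{2/2*} = S ∫_{ℝⁿ} |∇v|² dx. -/
open MeasureTheory Real

/-- The sharp constant `S = (π n(n−2))⁻¹ (Γ(n)/Γ(n/2))^{2/n}` in the Sobolev
inequality on `ℝⁿ`. -/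
noncomputable def sobolevS (n : ℕ) : ℝ :=
  (π * n * ((n : ℝ) - 2))⁻¹ * (Real.Gamma n / Real.Gamma ((n : ℝ) / 2)) ^ ((2 : ℝ) / n)

open MeasureTheory Real Set InnerProductSpace

lemma betaIoo (a b : ℝ) (ha : 0 < a) (hb : 0 < b) :
    ∫ u in Ioo (0:ℝ) 1, u ^ (a-1) * (1-u) ^ (b-1) = Gamma a * Gamma b / Gamma (a+b) := by
  have hab : Gamma (a+b) ≠ 0 := (Real.Gamma_pos_of_pos (by linarith)).ne'
  have h1 : Complex.betaIntegral a b =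
      ((∫ u in (0:ℝ)..1, u ^ (a-1) * (1-u) ^ (b-1) : ℝ) : ℂ) := by
    rw [Complex.betaIntegral, ← intervalIntegral.integral_ofReal]
    refine intervalIntegral.integral_congr fun x hx => ?_
    rw [Set.uIcc_of_le zero_le_one] at hx
    rw [show ((a:ℂ) - 1) = ((a - 1 : ℝ) : ℂ) by push_cast; ring,
        show ((b:ℂ) - 1) = ((b - 1 : ℝ) : ℂ) by push_cast; ring,
        show (1 - (x:ℂ)) = ((1 - x : ℝ) : ℂ) by push_cast; ring,
        ← Complex.ofReal_cpow hx.1, ← Complex.ofReal_cpow (by linarith [hx.2]),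
        ← Complex.ofReal_mul]
  have h2 := Complex.Gamma_mul_Gamma_eq_betaIntegral
    (s := a) (t := b) (by simpa using ha) (by simpa using hb)
  rw [h1, show ((a:ℂ) + b) = ((a + b : ℝ) : ℂ) by push_cast; ring, Complex.Gamma_ofReal,
    Complex.Gamma_ofReal, Complex.Gamma_ofReal, ← Complex.ofReal_mul, ← Complex.ofReal_mul] at h2
  have h4 := Complex.ofReal_injective h2
  have h5 : (∫ u in (0:ℝ)..1, u ^ (a-1) * (1-u) ^ (b-1)) = Gamma a * Gamma b / Gamma (a+b) := by
    rw [h4]; field_simp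
  rw [← h5, intervalIntegral.integral_of_le zero_le_one, integral_Ioc_eq_integral_Ioo]
open MeasureTheory Real Set

lemma betaIoi (a b : ℝ) (ha : 0 < a) (hb : 0 < b) :
    ∫ t in Ioi (0:ℝ), t ^ (a-1) * (1+t) ^ (-(a+b)) = Gamma a * Gamma b / Gamma (a+b) := by
  have key := integral_image_eq_integral_abs_deriv_smul (s := Ioi (0:ℝ))
    (f := fun t => 1 - (1+t)⁻¹) (f' := fun t => ((1+t)^2)⁻¹) measurableSet_Ioi
    (fun t ht => by
      have h1 : (0:ℝ) < 1 + t := by have := ht.out; linarith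
      have h := ((hasDerivAt_id t).const_add 1).inv h1.ne'
      have h2 := h.const_sub 1
      have h3 := h2.hasDerivWithinAt (s := Ioi (0:ℝ))
      simp only [id] at h3
      have he : -(-1 / (1 + t) ^ 2) = ((1+t)^2)⁻¹ := by field_simp
      rw [he] at h3
      exact h3)
    (fun t₁ h₁ t₂ h₂ h => by
      have e1 : (1+t₁)⁻¹ = (1+t₂)⁻¹ := by dsimp at h; linarith
      have := inv_injective e1; linarith)
    (fun u => u ^ (a-1) * (1-u) ^ (b-1))
  have himg : (fun t => 1 - (1+t)⁻¹) '' Ioi (0:ℝ) = Ioo (0:ℝ) 1 := by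
    ext u
    constructor
    · rintro ⟨t, ht, rfl⟩
      have h1 : (0:ℝ) < 1 + t := by have := ht.out; linarith
      have h2 : (1+t)⁻¹ < 1 := by
        rw [inv_lt_one_iff₀]; right; have := ht.out; linarith
      have h3 : 0 < (1+t)⁻¹ := inv_pos.2 h1
      exact ⟨by linarith, by linarith⟩
    · rintro ⟨h0, h1⟩
      refine ⟨u / (1-u), div_pos h0 (by linarith), ?_⟩
      have hne : (1:ℝ) - u ≠ 0 := by linarith
      have : 1 + u / (1-u) = (1-u)⁻¹ := by field_simp; ring
      show 1 - (1 + u/(1-u))⁻¹ = u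
      rw [this, inv_inv]; ring
  rw [himg] at key
  rw [betaIoo a b ha hb] at key
  rw [key]
  refine setIntegral_congr_fun measurableSet_Ioi fun t ht => ?_
  have ht0 : (0:ℝ) < t := ht
  have h1 : (0:ℝ) < 1 + t := by linarith
  have hft : 1 - (1+t)⁻¹ = t / (1+t) := by field_simp; ring
  have hft' : 1 - (1 - (1+t)⁻¹) = (1+t)⁻¹ := by ring
  rw [smul_eq_mul, hft', hft, abs_of_pos (by positivity),
    Real.div_rpow ht0.le h1.le, Real.inv_rpow h1.le]
  rw [div_eq_mul_inv, ← Real.rpow_neg h1.le, ← Real.rpow_neg h1.le]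
  rw [show ((1+t)^2)⁻¹ = (1+t) ^ (-2 : ℝ) by
    rw [← Real.rpow_two, ← Real.rpow_neg h1.le]]
  rw [mul_assoc, mul_comm ((1+t) ^ (-2:ℝ)), mul_assoc, ← Real.rpow_add h1,
    ← Real.rpow_add h1]
  ring_nf


lemma betaIoiSq (a b : ℝ) (ha : 0 < a) (hb : 0 < b) :
    ∫ s in Ioi (0:ℝ), s ^ (2*a-1) * (1+s^2) ^ (-(a+b))
      = Gamma a * Gamma b / (2 * Gamma (a+b)) := by
  have key := integral_comp_rpow_Ioi_of_pos
    (g := fun t => t ^ (a-1) * (1+t) ^ (-(a+b))) (p := 2) two_pos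
  rw [betaIoi a b ha hb] at key
  have congr1 : ∫ x in Ioi (0:ℝ),
      ((2:ℝ) * x ^ ((2:ℝ) - 1)) • ((x ^ (2:ℝ)) ^ (a-1) * (1+(x ^ (2:ℝ))) ^ (-(a+b)))
      = ∫ x in Ioi (0:ℝ), 2 * (x ^ (2*a-1) * (1+x^2) ^ (-(a+b))) := by
    refine setIntegral_congr_fun measurableSet_Ioi fun x hx => ?_
    have hx0 : (0:ℝ) < x := hx
    have e1 : x ^ (2:ℝ) = x ^ (2:ℕ) := Real.rpow_natCast x 2
    rw [smul_eq_mul, e1]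
    rw [show ((x:ℝ) ^ (2:ℕ)) ^ (a-1) = x ^ (2*(a-1)) by
      rw [← Real.rpow_natCast x 2, ← Real.rpow_mul hx0.le]; norm_num]
    have e2 : x ^ ((2:ℝ)-1) = x ^ (1:ℝ) := by norm_num
    rw [e2, Real.rpow_one]
    rw [show (2:ℝ) * x * (x ^ (2*(a-1)) * (1+x^2) ^ (-(a+b)))
        = 2 * ((x ^ (1:ℝ) * x ^ (2*(a-1))) * (1+x^2) ^ (-(a+b))) by rw [Real.rpow_one]; ring,
      ← Real.rpow_add hx0, show (1:ℝ) + 2*(a-1) = 2*a-1 by ring]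
  rw [congr1, integral_const_mul] at key
  have h2 : (∫ s in Ioi (0:ℝ), s ^ (2*a-1) * (1+s^2) ^ (-(a+b)))
      = (Gamma a * Gamma b / Gamma (a+b)) / 2 := by linarith [key]
  rw [h2, div_div]; ring


lemma hasGradAux {E : Type*} [NormedAddCommGroup E] [InnerProductSpace ℝ E] [CompleteSpace E]
    (c lam p : ℝ) (hlam : 0 < lam) (x₀ x : E) :
    HasGradientAt (fun y => (c * lam ^ p) * (lam^2 + ‖y - x₀‖^2) ^ (-p))
      ((c * lam ^ p * (-p) * (lam^2 + ‖x-x₀‖^2) ^ (-p-1) * 2) • (x - x₀)) x := by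
  have hw : (0:ℝ) < lam^2 + ‖x - x₀‖^2 := by positivity
  have hid : HasFDerivAt (fun y : E => y - x₀) (ContinuousLinearMap.id ℝ E) x :=
    (hasFDerivAt_id x).sub_const x₀
  have h1 := hid.norm_sq
  have h2 := h1.const_add (lam^2)
  have h3 := (Real.hasDerivAt_rpow_const (x := lam^2 + ‖x - x₀‖^2) (p := -p)
    (Or.inl hw.ne')).comp_hasFDerivAt x h2
  have h4 := h3.const_mul (c * lam^p)
  apply hasGradientAt_iff_hasFDerivAt.mpr
  refine h4.congr_fderiv ?_
  apply ContinuousLinearMap.ext; intro y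
  simp only [InnerProductSpace.toDual_apply_apply, real_inner_smul_left,
    ContinuousLinearMap.smul_apply, ContinuousLinearMap.coe_smul', Pi.smul_apply,
    ContinuousLinearMap.coe_comp', Function.comp_apply, ContinuousLinearMap.coe_id', id_eq,
    innerSL_apply_apply, smul_eq_mul, nsmul_eq_mul, Nat.cast_ofNat]
  ring


lemma scaleIoi (lam : ℝ) (hlam : 0 < lam) (a b : ℝ) :
    ∫ r in Ioi (0:ℝ), r ^ a * (lam^2 + r^2) ^ (-b)
      = lam ^ (a + 1 - 2*b) * ∫ s in Ioi (0:ℝ), s ^ a * (1+s^2) ^ (-b) := by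
  have key := integral_comp_mul_left_Ioi
    (g := fun r => r ^ a * (lam^2 + r^2) ^ (-b)) 0 hlam
  rw [mul_zero] at key
  have congr1 : ∫ x in Ioi (0:ℝ),
      (lam * x) ^ a * (lam^2 + (lam*x)^2) ^ (-b)
      = ∫ x in Ioi (0:ℝ), lam ^ (a - 2*b) * (x ^ a * (1+x^2) ^ (-b)) := by
    refine setIntegral_congr_fun measurableSet_Ioi fun x hx => ?_
    have hx0 : (0:ℝ) < x := hx
    have h1 : lam^2 + (lam*x)^2 = lam^2 * (1 + x^2) := by ring
    rw [h1, Real.mul_rpow hlam.le hx0.le, Real.mul_rpow (by positivity) (by positivity),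
      ← Real.rpow_natCast lam 2, ← Real.rpow_mul hlam.le]
    rw [show lam ^ a * x ^ a * (lam ^ ((2:ℕ) * -b) * (1 + x ^ 2) ^ (-b))
        = (lam ^ a * lam ^ ((2:ℕ) * -b)) * (x ^ a * (1 + x ^ 2) ^ (-b)) by ring,
      ← Real.rpow_add hlam, show a + (2:ℕ) * -b = a - 2*b by push_cast; ring]
  rw [congr1, integral_const_mul, smul_eq_mul] at key
  have e1 : lam ^ (a+1-2*b) = lam * lam ^ (a-2*b) := by
    rw [show a+1-2*b = 1 + (a - 2*b) by ring, Real.rpow_add hlam, Real.rpow_one]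
  field_simp at key
  rw [e1, ← key]
  ring


lemma radialInt (n : ℕ) (hn : 3 ≤ n) (g : ℝ → ℝ) :
    ∫ x : EuclideanSpace ℝ (Fin n), g ‖x‖
      = (n : ℝ) * (Real.sqrt π ^ n / Gamma (n/2+1)) * ∫ r in Ioi (0:ℝ), r ^ (n-1 : ℕ) * g r := by
  haveI : Nonempty (Fin n) := ⟨⟨0, by omega⟩⟩
  haveI : Nontrivial (EuclideanSpace ℝ (Fin n)) := by
    apply Module.nontrivial_of_finrank_pos (R := ℝ)
    rw [finrank_euclideanSpace_fin]; omega
  have key := MeasureTheory.integral_fun_norm_addHaar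
    (μ := (volume : Measure (EuclideanSpace ℝ (Fin n)))) g
  rw [key]
  have hdim : Module.finrank ℝ (EuclideanSpace ℝ (Fin n)) = n := finrank_euclideanSpace_fin
  rw [hdim]
  have hball : ((volume (Metric.ball (0 : EuclideanSpace ℝ (Fin n)) 1)).toReal : ℝ)
      = Real.sqrt π ^ n / Gamma (n/2+1) := by
    rw [EuclideanSpace.volume_ball]
    simp only [Fintype.card_fin]
    rw [ENNReal.ofReal_one, one_pow, one_mul, ENNReal.toReal_ofReal (by positivity)]
  rw [measureReal_def, hball, nsmul_eq_mul, smul_eq_mul]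
  rw [mul_assoc]
  simp only [smul_eq_mul]

lemma finalAlg (n : ℕ) (hn : 3 ≤ n) (c : ℝ) (hc : c ≠ 0) :
    (|c| ^ (2 * (n:ℝ) / ((n:ℝ) - 2)) *
        ((n:ℝ) * (Real.sqrt π ^ n / Gamma ((n:ℝ) / 2 + 1)) *
          (Gamma ((n:ℝ) / 2) * Gamma ((n:ℝ) / 2) / (2 * Gamma (n:ℝ))))) ^ (((n:ℝ) - 2) / (n:ℝ)) =
    sobolevS n *
      (c ^ 2 * ((n:ℝ) - 2) ^ 2 *
        ((n:ℝ) * (Real.sqrt π ^ n / Gamma ((n:ℝ) / 2 + 1)) *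
          (Gamma ((n:ℝ) / 2 + 1) * Gamma ((n:ℝ) / 2 - 1) / (2 * Gamma (n:ℝ))))) := by
  have hm : (3:ℝ) ≤ (n:ℝ) := by exact_mod_cast hn
  set m : ℝ := (n : ℝ) with hmdef
  have hm0 : (0:ℝ) < m := by linarith
  have hm2 : (0:ℝ) < m - 2 := by linarith
  set G : ℝ := Gamma (m/2) with hGdef
  set A : ℝ := Gamma m with hAdef
  have hGpos : 0 < G := Real.Gamma_pos_of_pos (by linarith)
  have hApos : 0 < A := Real.Gamma_pos_of_pos (by linarith)
  have hP : Real.sqrt π ^ n = π ^ (m/2) := by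
    rw [Real.sqrt_eq_rpow, ← Real.rpow_natCast (π ^ ((1:ℝ)/2)) n, ← Real.rpow_mul pi_pos.le]
    congr 1
    rw [hmdef]; ring
  have hG1 : Gamma (m/2+1) = (m/2) * G := by
    rw [hGdef, ← Real.Gamma_add_one (by positivity)]
  have hG2 : Gamma (m/2-1) = G / (m/2-1) := by
    have h := Real.Gamma_add_one (s := m/2-1) (by intro h; rw [sub_eq_zero] at h; nlinarith)
    rw [show m/2-1+1 = m/2 by ring] at h
    rw [hGdef, h]
    field_simp
  set R : ℝ := G / A with hRdef
  have hR : 0 < R := by positivity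
  have hπP : (0:ℝ) < π ^ (m/2) := Real.rpow_pos_of_pos pi_pos _
  rw [hP, hG1, hG2]
  have hX : m * (π^(m/2) / ((m/2)*G)) * (G*G/(2*A)) = π^(m/2) * R := by
    rw [hRdef]; field_simp
  have hY : m * (π^(m/2) / ((m/2)*G)) * ((m/2)*G * (G/(m/2-1))/(2*A))
      = m/(m-2) * (π^(m/2) * R) := by
    have h1 : G ≠ 0 := hGpos.ne'
    have h2 : A ≠ 0 := hApos.ne'
    have h3 : m ≠ 0 := hm0.ne'
    have h4 : m - 2 ≠ 0 := hm2.ne'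
    have h5 : m/2 - 1 ≠ 0 := by intro h; rw [sub_eq_zero] at h; nlinarith
    rw [hRdef]; field_simp
  rw [hX, hY]
  rw [Real.mul_rpow (by positivity) (by positivity),
      Real.mul_rpow (by positivity) (by positivity),
      ← Real.rpow_mul (abs_nonneg c),
      show 2 * m / (m-2) * ((m-2)/m) = (2:ℝ) by have h3 : m ≠ 0 := hm0.ne'; have h4 : m-2 ≠ 0 := hm2.ne'; field_simp,
      show |c| ^ (2:ℝ) = c^2 by rw [Real.rpow_two, sq_abs],
      ← Real.rpow_mul pi_pos.le,
      show m/2 * ((m-2)/m) = (m-2)/2 by have h3 : m ≠ 0 := hm0.ne'; field_simp]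
  rw [show sobolevS n = (π*m*(m-2))⁻¹ * (A/G) ^ ((2:ℝ)/m) from rfl]
  rw [show A/G = R⁻¹ by rw [hRdef, inv_div], Real.inv_rpow hR.le, ← Real.rpow_neg hR.le]
  have hRR : R ^ (-((2:ℝ)/m)) * R = R ^ ((m-2)/m) := by
    nth_rewrite 2 [← Real.rpow_one R]
    rw [← Real.rpow_add hR]
    congr 1
    have h3 : m ≠ 0 := by positivity
    field_simp
    ring
  have hππ : π ^ ((m-2)/2) = π ^ (m/2) / π := by
    rw [show (m-2)/2 = m/2 - 1 by ring, Real.rpow_sub pi_pos, Real.rpow_one]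
  rw [← hRR, hππ]
  field_simp

/-- the Aubin–Talenti functions
`v(x) = c (λ/(λ² + |x − x₀|²))^{(n−2)/2}` attain equality in the sharp Sobolev
inequality `(∫ |v|^{2*})^{2/2*} = S ∫ |∇v|²`. -/
theorem aubin_talenti_extremal (n : ℕ) (hn : 3 ≤ n) (c lam : ℝ) (hc : c ≠ 0)
    (hlam : 0 < lam) (x₀ : EuclideanSpace ℝ (Fin n))
    (v : EuclideanSpace ℝ (Fin n) → ℝ)
    (hv : v = fun x => c * (lam / (lam ^ 2 + ‖x - x₀‖ ^ 2)) ^ (((n : ℝ) - 2) / 2)) :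
    (∫ x, |v x| ^ (2 * (n : ℝ) / ((n : ℝ) - 2))) ^ (((n : ℝ) - 2) / n) =
      sobolevS n * ∫ x, ‖gradient v x‖ ^ 2 := by
  have hLHS : (∫ x, |v x| ^ (2 * (n : ℝ) / ((n : ℝ) - 2)))
      = |c| ^ (2 * (n : ℝ) / ((n : ℝ) - 2)) *
        ((n:ℝ) * (Real.sqrt π ^ n / Gamma ((n:ℝ)/2+1)) *
          (Gamma ((n:ℝ)/2) * Gamma ((n:ℝ)/2) / (2 * Gamma (n:ℝ)))) := by
    have hm : (3:ℝ) ≤ (n:ℝ) := by exact_mod_cast hn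
    set m : ℝ := (n : ℝ) with hmdef
    have hm2 : 0 < m - 2 := by linarith
    set q : ℝ := 2 * m / (m - 2) with hqdef
    have hw : ∀ x : EuclideanSpace ℝ (Fin n), (0:ℝ) < lam^2 + ‖x - x₀‖^2 := fun x => by positivity
    have habs : ∀ x, |v x| ^ q
        = |c| ^ q * (lam ^ m * (lam^2 + ‖x-x₀‖^2) ^ (-m)) := by
      intro x
      rw [hv]
      simp only
      rw [abs_mul, abs_of_pos (Real.rpow_pos_of_pos (div_pos hlam (hw x)) _),
        Real.mul_rpow (abs_nonneg c) (Real.rpow_nonneg (div_nonneg hlam.le (hw x).le) _),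
        ← Real.rpow_mul (div_nonneg hlam.le (hw x).le),
        show (m - 2)/2 * q = m by rw [hqdef]; field_simp,
        Real.div_rpow hlam.le (hw x).le, Real.rpow_neg (hw x).le, div_eq_mul_inv]
    have e1 : (∫ x, |v x| ^ q)
        = |c| ^ q * ∫ x : EuclideanSpace ℝ (Fin n), lam ^ m * (lam^2 + ‖x - x₀‖^2) ^ (-m) := by
      rw [← integral_const_mul]
      exact integral_congr_ae (Filter.Eventually.of_forall habs)
    have e2 : (∫ x : EuclideanSpace ℝ (Fin n), lam ^ m * (lam^2 + ‖x - x₀‖^2) ^ (-m))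
        = ∫ x : EuclideanSpace ℝ (Fin n), lam ^ m * (lam^2 + ‖x‖^2) ^ (-m) :=
      integral_sub_right_eq_self (fun x => lam ^ m * (lam^2 + ‖x‖^2) ^ (-m)) x₀
    have e3 := radialInt n hn (fun r => lam ^ m * (lam^2 + r^2) ^ (-m))
    have e4 : (∫ r in Ioi (0:ℝ), r ^ (n-1 : ℕ) * (lam ^ m * (lam^2 + r^2) ^ (-m)))
        = lam ^ m * ∫ r in Ioi (0:ℝ), r ^ (m-1) * (lam^2 + r^2) ^ (-m) := by
      rw [← integral_const_mul]
      refine setIntegral_congr_fun measurableSet_Ioi fun r hr => ?_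
      have hr0 : (0:ℝ) < r := hr
      have hcast : ((n-1 : ℕ) : ℝ) = m - 1 := by
        rw [Nat.cast_sub (by omega)]; push_cast; rw [hmdef]
      rw [show r ^ (m-1) = r ^ (n-1:ℕ) by rw [← hcast, Real.rpow_natCast]]
      ring
    have e5 := scaleIoi lam hlam (m-1) m
    have e6 := betaIoiSq (m/2) (m/2) (by linarith) (by linarith)
    rw [show 2*(m/2)-1 = m-1 by ring, show -(m/2+m/2) = -m by ring,
      show m/2+m/2 = m by ring] at e6
    rw [e1, e2, e3, e4, e5, e6, ← mul_assoc (lam ^ m), ← Real.rpow_add hlam,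
      show m + (m-1+1-2*m) = 0 by ring, Real.rpow_zero, one_mul]
  have hRHS : (∫ x, ‖gradient v x‖ ^ 2)
      = c^2 * ((n:ℝ)-2)^2 *
        ((n:ℝ) * (Real.sqrt π ^ n / Gamma ((n:ℝ)/2+1)) *
          (Gamma ((n:ℝ)/2+1) * Gamma ((n:ℝ)/2-1) / (2 * Gamma (n:ℝ)))) := by
    have hm : (3:ℝ) ≤ (n:ℝ) := by exact_mod_cast hn
    set m : ℝ := (n : ℝ) with hmdef
    have hm2 : 0 < m - 2 := by linarith
    set p : ℝ := (m - 2)/2 with hpdef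
    have hp : 0 < p := by positivity
    have hw : ∀ x : EuclideanSpace ℝ (Fin n), (0:ℝ) < lam^2 + ‖x - x₀‖^2 := fun x => by positivity
    have hv' : v = fun y => (c * lam ^ p) * (lam^2 + ‖y - x₀‖^2) ^ (-p) := by
      rw [hv]; funext y
      rw [Real.div_rpow hlam.le (hw y).le, Real.rpow_neg (hw y).le, div_eq_mul_inv, mul_assoc]
    have hgrad : ∀ x, gradient v x
        = (c * lam ^ p * (-p) * (lam^2 + ‖x-x₀‖^2) ^ (-p-1) * 2) • (x - x₀) := fun x => by
      rw [hv']; exact (hasGradAux c lam p hlam x₀ x).gradient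
    have ha : (lam ^ p) ^ (2:ℕ) = lam ^ (m-2) := by
      rw [← Real.rpow_natCast (lam ^ p) 2, ← Real.rpow_mul hlam.le]
      congr 1; push_cast; rw [hpdef]; ring
    have hng : ∀ x, ‖gradient v x‖ ^ 2
        = (c^2*(m-2)^2*lam^(m-2)) * (‖x-x₀‖^2 * (lam^2+‖x-x₀‖^2) ^ (-m)) := by
      intro x
      rw [hgrad x, norm_smul, mul_pow, Real.norm_eq_abs, sq_abs]
      have hb : ((lam^2+‖x-x₀‖^2) ^ (-p-1)) ^ (2:ℕ) = (lam^2+‖x-x₀‖^2) ^ (-m) := by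
        rw [← Real.rpow_natCast _ 2, ← Real.rpow_mul (hw x).le]
        congr 1; push_cast; rw [hpdef]; ring
      rw [show (c * lam ^ p * (-p) * (lam^2+‖x-x₀‖^2) ^ (-p-1) * 2)^2
          = (c^2 * (p^2*4)) * ((lam ^ p)^(2:ℕ) * ((lam^2+‖x-x₀‖^2) ^ (-p-1))^(2:ℕ)) by ring,
        ha, hb, show p^2*4 = (m-2)^2 by rw [hpdef]; ring]
      ring
    have e1 : (∫ x, ‖gradient v x‖ ^ 2)
        = (c^2*(m-2)^2*lam^(m-2)) *
          ∫ x : EuclideanSpace ℝ (Fin n), ‖x-x₀‖^2 * (lam^2+‖x-x₀‖^2) ^ (-m) := by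
      rw [← integral_const_mul]
      exact integral_congr_ae (Filter.Eventually.of_forall hng)
    have e2 : (∫ x : EuclideanSpace ℝ (Fin n), ‖x-x₀‖^2 * (lam^2+‖x-x₀‖^2) ^ (-m))
        = ∫ x : EuclideanSpace ℝ (Fin n), ‖x‖^2 * (lam^2+‖x‖^2) ^ (-m) :=
      integral_sub_right_eq_self (fun x => ‖x‖^2 * (lam^2+‖x‖^2) ^ (-m)) x₀
    have e3 := radialInt n hn (fun r => r^2 * (lam^2+r^2) ^ (-m))
    have e4 : (∫ r in Ioi (0:ℝ), r ^ (n-1 : ℕ) * (r^2 * (lam^2 + r^2) ^ (-m)))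
        = ∫ r in Ioi (0:ℝ), r ^ (m+1) * (lam^2 + r^2) ^ (-m) := by
      refine setIntegral_congr_fun measurableSet_Ioi fun r hr => ?_
      have hr0 : (0:ℝ) < r := hr
      have hcast : ((n+1 : ℕ) : ℝ) = m + 1 := by push_cast; rw [hmdef]
      rw [show r ^ (m+1) = r ^ (n+1:ℕ) by rw [← hcast, Real.rpow_natCast],
        show r ^ (n-1:ℕ) * (r^2 * (lam^2 + r^2) ^ (-m))
          = r ^ (n-1:ℕ) * r^(2:ℕ) * (lam^2 + r^2) ^ (-m) by ring, ← pow_add]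
      congr 2
      omega
    have e5 := scaleIoi lam hlam (m+1) m
    have e6 := betaIoiSq (m/2+1) (m/2-1) (by linarith) (by linarith)
    rw [show 2*(m/2+1)-1 = m+1 by ring, show -(m/2+1+(m/2-1)) = -m by ring,
      show m/2+1+(m/2-1) = m by ring] at e6
    rw [e1, e2, e3, e4, e5, e6]
    rw [show (c^2*(m-2)^2*lam^(m-2)) * (m * (√π ^ n / Gamma (m/2+1)) *
        (lam ^ (m+1+1-2*m) * (Gamma (m/2+1) * Gamma (m/2-1) / (2 * Gamma m))))
        = (lam^(m-2) * lam ^ (m+1+1-2*m)) * (c^2*(m-2)^2 * (m * (√π ^ n / Gamma (m/2+1)) *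
        (Gamma (m/2+1) * Gamma (m/2-1) / (2 * Gamma m)))) by ring,
      ← Real.rpow_add hlam, show m-2 + (m+1+1-2*m) = 0 by ring, Real.rpow_zero, one_mul]
  rw [hLHS, hRHS]
  exact finalAlg n hn c hc
end

section
/- Let n ≥ 3 be an integer. Then ∫_{ℝⁿ} |∇U₁(x)|² dx = (1/(2^{2/n} S)) ∫_{ℝⁿ} U₁(x)^{2*} dx, and the Sobolev quotient of U₁ equals the sharp constant: ∫_{ℝⁿ} |∇U₁|² dx = (1/S) (∫_{ℝⁿ} U₁^{2*} dx)^{2/2*}. -/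
open MeasureTheory Real
open Set InnerProductSpace

/-- The constant `c(n) = 1/(2^{2/n}(n−2) n S)`. -/
noncomputable def bubbleC (n : ℕ) : ℝ :=
  1 / (2 ^ ((2 : ℝ) / n) * ((n : ℝ) - 2) * n * sobolevS n)

/-- The bubble `U_{x₀,λ}(x) = (λ/(λ² + c(n)|x−x₀|²))^{(n−2)/2}`. -/
noncomputable def bubble (n : ℕ) (x₀ : EuclideanSpace ℝ (Fin n)) (lam : ℝ)
    (x : EuclideanSpace ℝ (Fin n)) : ℝ :=
  (lam / (lam ^ 2 + bubbleC n * ‖x - x₀‖ ^ 2)) ^ (((n : ℝ) - 2) / 2)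

lemma real_beta {a b : ℝ} (ha : 0 < a) (hb : 0 < b) :
    ∫ x in Ioo (0:ℝ) 1, x ^ (a-1) * (1-x) ^ (b-1) =
      Real.Gamma a * Real.Gamma b / Real.Gamma (a+b) := by
  have h := Complex.Gamma_mul_Gamma_eq_betaIntegral (s := (a:ℂ)) (t := (b:ℂ))
    (by simpa using ha) (by simpa using hb)
  rw [Complex.betaIntegral] at h
  have hpt : ∀ x ∈ Ioo (0:ℝ) 1, (x:ℂ) ^ ((a:ℂ)-1) * (1-(x:ℂ)) ^ ((b:ℂ)-1)
      = ((x ^ (a-1) * (1-x) ^ (b-1) : ℝ) : ℂ) := by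
    intro x hx
    rw [Complex.ofReal_mul, Complex.ofReal_cpow hx.1.le,
      Complex.ofReal_cpow (by linarith [hx.2] : (0:ℝ) ≤ 1 - x)]
    push_cast
    ring
  have hint : (∫ x in (0:ℝ)..1, (x:ℂ) ^ ((a:ℂ)-1) * (1-(x:ℂ)) ^ ((b:ℂ)-1)) =
      ((∫ x in Ioo (0:ℝ) 1, x ^ (a-1) * (1-x) ^ (b-1) : ℝ) : ℂ) := by
    rw [intervalIntegral.integral_of_le zero_le_one, integral_Ioc_eq_integral_Ioo,
      setIntegral_congr_fun measurableSet_Ioo hpt]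
    exact integral_ofReal
  rw [hint, ← Complex.ofReal_add, Complex.Gamma_ofReal, Complex.Gamma_ofReal,
    Complex.Gamma_ofReal] at h
  have h' : Real.Gamma a * Real.Gamma b =
      Real.Gamma (a+b) * ∫ x in Ioo (0:ℝ) 1, x ^ (a-1) * (1-x) ^ (b-1) := by
    exact_mod_cast h
  rw [h']
  field_simp [ (Real.Gamma_pos_of_pos (by linarith : 0 < a + b)).ne']

lemma image_div_one_sub : (fun x : ℝ => x / (1 - x)) '' Ioo 0 1 = Ioi 0 := by
  ext u
  constructor
  · rintro ⟨x, hx, rfl⟩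
    exact div_pos hx.1 (by linarith [hx.2])
  · intro hu
    have hu' : (0:ℝ) < u := hu
    refine ⟨u / (1 + u), ⟨div_pos hu' (by linarith), ?_⟩, ?_⟩
    · rw [div_lt_one (by linarith)]; linarith
    · have h1 : 1 - u / (1+u) = 1/(1+u) := by field_simp; ring
      show u / (1+u) / (1 - u/(1+u)) = u
      rw [h1]
      field_simp
lemma beta_Ioi {a b : ℝ} (ha : 0 < a) (hb : 0 < b) :
    ∫ u in Ioi (0:ℝ), u ^ (a-1) * (1+u) ^ (-(a+b)) =
      Real.Gamma a * Real.Gamma b / Real.Gamma (a+b) := by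
  rw [← real_beta ha hb, ← image_div_one_sub]
  rw [integral_image_eq_integral_abs_deriv_smul measurableSet_Ioo
    (f' := fun x => (1-x)^(-2 : ℤ)) ?hderiv ?hinj]
  · refine setIntegral_congr_fun measurableSet_Ioo fun x hx => ?_
    have h1 : (0:ℝ) < x := hx.1
    have h2 : (0:ℝ) < 1 - x := by linarith [hx.2]
    have e1 : (x / (1-x)) ^ (a-1) = x ^ (a-1) * (1-x) ^ (-(a-1)) := by
      rw [div_rpow h1.le h2.le, rpow_neg h2.le, div_eq_mul_inv]
    have e2 : (1 + x / (1-x)) = (1-x)⁻¹ := by field_simp; ring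
    have e3 : ((1-x)⁻¹) ^ (-(a+b)) = (1-x) ^ (a+b) := by
      rw [inv_rpow h2.le, ← rpow_neg h2.le, neg_neg]
    rw [smul_eq_mul, e2, e3, e1]
    have habs : |(1-x)^(-2:ℤ)| = (1-x) ^ (-2 : ℝ) := by
      rw [abs_of_nonneg (by positivity), ← rpow_intCast]
      norm_num
    rw [habs]
    rw [show (1-x:ℝ)^(b-1) = (1-x)^(-(2:ℝ)) * ((1-x) ^ (-(a-1)) * (1-x)^(a+b)) by
      rw [← rpow_add h2, ← rpow_add h2]; ring_nf]
    ring
  case hderiv =>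
    intro x hx
    have h2 : (1:ℝ) - x ≠ 0 := by have := hx.2; intro h; simp [sub_eq_zero] at h; linarith [hx.2]
    have hd : HasDerivAt (fun x : ℝ => x / (1 - x)) ((1-x)^(-2:ℤ)) x := by
      have h := (hasDerivAt_id x).div ((hasDerivAt_id x).const_sub 1) h2
      have e : (1 * (1 - id x) - id x * -1) / (1 - id x) ^ 2 = (1-x)^(-2:ℤ) := by
        simp only [id]
        have h1 : (1:ℝ)*(1-x) - x*(-1) = 1 := by ring
        rw [h1, one_div, zpow_neg]
        congr 1
      exact e ▸ h
    exact hd.hasDerivWithinAt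
  case hinj =>
    have : StrictMonoOn (fun x : ℝ => x / (1 - x)) (Ioo 0 1) := by
      intro x hx y hy hxy
      have h2 : (0:ℝ) < 1 - x := by linarith [hx.2]
      have h2' : (0:ℝ) < 1 - y := by linarith [hy.2]
      rw [div_lt_div_iff₀ h2 h2']
      nlinarith
    exact this.injOn


lemma J_sub (k : ℕ) (m : ℝ) :
    ∫ r in Ioi (0:ℝ), r^k * (1+r^2)^(-m)
      = (1/2) * ∫ u in Ioi (0:ℝ), u ^ ((((k:ℝ)+1)/2) - 1) * (1+u) ^ (-m) := by
  rw [← integral_const_mul]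
  rw [← integral_comp_rpow_Ioi
    (fun u => (1/2) * (u ^ ((((k:ℝ)+1)/2) - 1) * (1+u) ^ (-m))) (p := 2) two_ne_zero]
  refine setIntegral_congr_fun measurableSet_Ioi fun x hx => ?_
  have hx : (0:ℝ) < x := hx
  have hx2 : x ^ (2:ℝ) = x ^ 2 := by
    rw [← rpow_natCast x 2]; norm_num
  rw [smul_eq_mul, hx2]
  have h1 : ((x^2) : ℝ) ^ ((((k:ℝ)+1)/2) - 1) = x ^ ((k:ℝ) - 1) := by
    rw [← rpow_natCast x 2, ← rpow_mul hx.le]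
    congr 1
    push_cast
    ring
  rw [h1]
  have h2 : |(2:ℝ)| * x ^ ((2:ℝ) - 1) = 2 * x := by
    rw [abs_two]
    norm_num
  rw [h2]
  have h3 : x * x ^ ((k:ℝ) - 1) = x ^ k := by
    rw [← rpow_natCast x k]
    nth_rewrite 1 [← rpow_one x]
    rw [← rpow_add hx]
    norm_num
  rw [← h3]
  ring

lemma J_scale (k : ℕ) (m : ℝ) {c : ℝ} (hc : 0 < c) :
    ∫ r in Ioi (0:ℝ), r^k * (1+c*r^2)^(-m)
      = c ^ (-(((k:ℝ)+1)/2)) * ∫ r in Ioi (0:ℝ), r^k * (1+r^2)^(-m) := by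
  set b := c ^ ((1:ℝ)/2) with hbdef
  have hb : 0 < b := rpow_pos_of_pos hc _
  have key := integral_comp_mul_left_Ioi (fun s => s^k*(1+s^2)^(-m)) 0 hb
  rw [mul_zero] at key
  have hb2 : b ^ 2 = c := by
    rw [hbdef, ← rpow_natCast (c ^ ((1:ℝ)/2)) 2, ← rpow_mul hc.le]
    norm_num
  have hpt : ∀ x ∈ Ioi (0:ℝ), (fun s => s^k*(1+s^2)^(-m)) (b*x)
      = b^k * (x^k * (1+c*x^2)^(-m)) := by
    intro x hx
    simp only
    rw [mul_pow, mul_pow, hb2]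
    ring
  rw [setIntegral_congr_fun measurableSet_Ioi hpt, integral_const_mul] at key
  have hbk : (0:ℝ) < b^k := pow_pos hb k
  have : ∫ r in Ioi (0:ℝ), r^k * (1+c*r^2)^(-m)
      = (b^k)⁻¹ * (b⁻¹ * ∫ r in Ioi (0:ℝ), r^k * (1+r^2)^(-m)) := by
    rw [← smul_eq_mul (a := b⁻¹), ← key]
    field_simp
  rw [this]
  rw [show -(((k:ℝ)+1)/2) = (1/2) * (-((k:ℝ)+1)) by ring, rpow_mul hc.le, ← hbdef,
    rpow_neg hb.le, show ((k:ℝ)+1) = ((k+1 : ℕ):ℝ) by push_cast; ring, rpow_natCast,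
    pow_succ, mul_inv, mul_assoc]



lemma J_eval' (k : ℕ) (m a : ℝ) {c : ℝ} (hc : 0 < c) (hA : (k:ℝ) + 1 = 2*a)
    (ha : 0 < a) (hb : 0 < m - a) :
    ∫ r in Ioi (0:ℝ), r^k * (1+c*r^2)^(-m)
      = c ^ (-a) * (1/2) * (Real.Gamma a * Real.Gamma (m - a) / Real.Gamma m) := by
  have hAa : ((k:ℝ)+1)/2 = a := by linarith
  rw [J_scale k m hc, J_sub k m, hAa]
  have hpt : ∀ u ∈ Ioi (0:ℝ), u ^ (a - 1) * (1+u) ^ (-m)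
      = u ^ (a - 1) * (1+u) ^ (-(a + (m - a))) := by
    intro u hu; ring_nf
  rw [setIntegral_congr_fun measurableSet_Ioi hpt, beta_Ioi ha hb,
    show (a + (m - a)) = m by ring]
  ring


section GradientLemma
variable {E : Type*} [NormedAddCommGroup E] [InnerProductSpace ℝ E] [CompleteSpace E]

lemma toDual_symm_innerSL (x : E) : (toDual ℝ E).symm (innerSL ℝ x) = x := by
  apply (toDual ℝ E).injective
  simp only [LinearIsometryEquiv.apply_symm_apply]
  ext y
  simp [toDual_apply_apply]

lemma hasGradientAt_one_add_sq (c q : ℝ) (hpos : ∀ y : E, 0 < 1 + c*‖y‖^2) (x : E) :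
    HasGradientAt (fun y : E => (1 + c*‖y‖^2) ^ q)
      ((q * (1 + c*‖x‖^2)^(q-1) * (2*c)) • x) x := by
  have hw : HasFDerivAt (fun y : E => 1 + c*‖y‖^2) ((2*c) • (innerSL ℝ x)) x := by
    have h1 := (hasFDerivAt_id x).norm_sq
    have h2 := (h1.const_mul c).const_add 1
    refine h2.congr_fderiv ?_
    ext y
    simp [smul_smul]
    ring
  have hd : HasDerivAt (fun t : ℝ => t ^ q) (q * (1 + c*‖x‖^2) ^ (q-1)) (1 + c*‖x‖^2) :=
    Real.hasDerivAt_rpow_const (Or.inl (hpos x).ne')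
  have hf := hd.comp_hasFDerivAt x hw
  rw [hasFDerivAt_iff_hasGradientAt] at hf
  convert hf using 1
  · rfl
  rw [smul_smul, LinearIsometryEquiv.map_smul, toDual_symm_innerSL]

end GradientLemma


/-- on all of `ℝⁿ`, the bubble `U₁` satisfies
`∫ |∇U₁|² = (1/(2^{2/n}S)) ∫ U₁^{2*}` and its Sobolev quotient equals the
sharp constant: `∫ |∇U₁|² = (1/S)(∫ U₁^{2*})^{2/2*}`. -/
theorem bubble_quotient (n : ℕ) (hn : 3 ≤ n) :
    (∫ x, ‖gradient (bubble n 0 1) x‖ ^ 2 =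
      (1 / (2 ^ ((2 : ℝ) / n) * sobolevS n)) *
        ∫ x, bubble n 0 1 x ^ (2 * (n : ℝ) / ((n : ℝ) - 2))) ∧
    ∫ x, ‖gradient (bubble n 0 1) x‖ ^ 2 =
      (1 / sobolevS n) *
        (∫ x, bubble n 0 1 x ^ (2 * (n : ℝ) / ((n : ℝ) - 2))) ^ (((n : ℝ) - 2) / n) := by
  set m := (n:ℝ) with hm
  have hm3 : (3:ℝ) ≤ m := by rw [hm]; exact_mod_cast hn
  have hm0 : (0:ℝ) < m := by linarith
  have hm2 : (0:ℝ) < m - 2 := by linarith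
  have hG2 : 0 < Real.Gamma (m/2) := Real.Gamma_pos_of_pos (by linarith)
  have hGM : 0 < Real.Gamma m := Real.Gamma_pos_of_pos hm0
  have hS : 0 < sobolevS n := by
    rw [sobolevS]
    apply mul_pos (inv_pos.mpr (by positivity)) (rpow_pos_of_pos (by positivity) _)
  set c := bubbleC n with hc0
  have hcdef : c = 1/(2^((2:ℝ)/m) * (m-2) * m * sobolevS n) := rfl
  have hc : 0 < c := by
    rw [hcdef]
    apply div_pos one_pos
    have h1 : (0:ℝ) < 2 ^ ((2:ℝ)/m) := rpow_pos_of_pos two_pos _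
    positivity
  have hw : ∀ x : EuclideanSpace ℝ (Fin n), 0 < 1 + c*‖x‖^2 := fun x => by positivity
  -- the bubble as a power function
  have hUeq : bubble n 0 1 = fun x : EuclideanSpace ℝ (Fin n) =>
      (1 + c*‖x‖^2) ^ (-((m-2)/2)) := by
    funext x
    rw [bubble, sub_zero, one_pow, one_div, inv_rpow (hw x).le, ← rpow_neg (hw x).le]
  -- gradient
  have hgradval : ∀ x : EuclideanSpace ℝ (Fin n), gradient (bubble n 0 1) x
      = ((-((m-2)/2)) * (1 + c*‖x‖^2)^((-((m-2)/2))-1) * (2*c)) • x := by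
    intro x
    rw [hUeq]
    exact (hasGradientAt_one_add_sq c (-((m-2)/2)) hw x).gradient
  have hgn : ∀ x : EuclideanSpace ℝ (Fin n), ‖gradient (bubble n 0 1) x‖^2
      = ((m-2)*c)^2 * (‖x‖^2 * (1+c*‖x‖^2)^(-m)) := by
    intro x
    rw [hgradval x, norm_smul, mul_pow, Real.norm_eq_abs, sq_abs]
    have hexp : ((1 + c*‖x‖^2)^((-((m-2)/2))-1))^2 = (1+c*‖x‖^2)^(-m) := by
      rw [← rpow_natCast ((1 + c*‖x‖^2)^((-((m-2)/2))-1)) 2, ← rpow_mul (hw x).le]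
      congr 1
      push_cast
      ring
    rw [show ((-((m-2)/2)) * (1 + c*‖x‖^2)^((-((m-2)/2))-1) * (2*c))^2
        = ((m-2)*c)^2 * (((1 + c*‖x‖^2)^((-((m-2)/2))-1))^2) by ring, hexp]
    ring
  have hUpow : ∀ x : EuclideanSpace ℝ (Fin n),
      bubble n 0 1 x ^ (2 * m / (m - 2)) = (1+c*‖x‖^2)^(-m) := by
    intro x
    rw [hUeq]
    simp only
    rw [← rpow_mul (hw x).le]
    congr 1
    field_simp
  -- radial reduction
  haveI : Nonempty (Fin n) := ⟨⟨0, by omega⟩⟩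
  haveI : Nontrivial (EuclideanSpace ℝ (Fin n)) := by
    apply Module.nontrivial_of_finrank_pos (R := ℝ)
    rw [finrank_euclideanSpace_fin]
    omega
  have radial : ∀ f : ℝ → ℝ, (∫ x : EuclideanSpace ℝ (Fin n), f ‖x‖)
      = m * (volume (Metric.ball (0:EuclideanSpace ℝ (Fin n)) 1)).toReal *
        ∫ r in Ioi (0:ℝ), r^(n-1) * f r := by
    intro f
    have h := integral_fun_norm_addHaar (volume : Measure (EuclideanSpace ℝ (Fin n))) f
    rw [finrank_euclideanSpace_fin] at h
    rw [h]
    simp only [nsmul_eq_mul, smul_eq_mul]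
    rw [← hm, measureReal_def]
    ring
  -- volume of the unit ball
  have hball : (volume (Metric.ball (0:EuclideanSpace ℝ (Fin n)) 1)).toReal
      = π ^ (m/2) / Real.Gamma (m/2+1) := by
    rw [EuclideanSpace.volume_ball, Fintype.card_fin]
    simp only [ENNReal.ofReal_one, one_pow, one_mul]
    rw [ENNReal.toReal_ofReal (by positivity)]
    congr 1
    rw [Real.sqrt_eq_rpow, ← rpow_natCast (π ^ ((1:ℝ)/2)) n, ← rpow_mul pi_pos.le, ← hm]
    congr 1
    ring
  -- 1D integral evaluations
  have hcast1 : ((n-1 : ℕ):ℝ) + 1 = 2 * (m/2) := by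
    rw [Nat.cast_sub (by omega : 1 ≤ n), ← hm]
    push_cast
    ring
  have hcast2 : ((n+1 : ℕ):ℝ) + 1 = 2 * (m/2 + 1) := by
    push_cast
    rw [← hm]
    ring
  have hJ1 := J_eval' (n-1) m (m/2) hc hcast1 (by linarith) (by linarith)
  rw [show m - m/2 = m/2 by ring] at hJ1
  have hJ2 := J_eval' (n+1) m (m/2+1) hc hcast2 (by linarith) (by linarith)
  rw [show m - (m/2+1) = m/2 - 1 by ring] at hJ2
  -- Gamma recurrences
  have hGrec : Real.Gamma (m/2+1) = (m/2) * Real.Gamma (m/2) :=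
    Real.Gamma_add_one (by positivity)
  have hGrec2 : Real.Gamma (m/2-1) = Real.Gamma (m/2)/(m/2-1) := by
    have h := Real.Gamma_add_one (s := m/2 - 1) (ne_of_gt (by linarith : (0:ℝ) < m/2 - 1))
    rw [show m/2-1+1 = m/2 by ring] at h
    rw [eq_div_iff (ne_of_gt (by linarith : (0:ℝ) < m/2 - 1))]
    rw [h]
    ring
  -- value of c ^ (-(m/2))
  have hcinv : c⁻¹ = 2^((2:ℝ)/m) * (Real.Gamma m / Real.Gamma (m/2))^((2:ℝ)/m) * π⁻¹ := by
    rw [hcdef, sobolevS, ← hm, one_div, inv_inv]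
    field_simp
  have h2m : (0:ℝ) < 2^((2:ℝ)/m) := rpow_pos_of_pos two_pos _
  have hRm : (0:ℝ) < (Real.Gamma m / Real.Gamma (m/2))^((2:ℝ)/m) :=
    rpow_pos_of_pos (by positivity) _
  have hcm : c ^ (-(m/2)) = 2 * (π ^ (m/2))⁻¹ * (Real.Gamma m / Real.Gamma (m/2)) := by
    rw [rpow_neg hc.le, ← inv_rpow hc.le, hcinv,
      mul_rpow (by positivity) (inv_pos.mpr pi_pos).le, mul_rpow h2m.le hRm.le,
      inv_rpow pi_pos.le, ← rpow_mul (le_of_lt two_pos),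
      ← rpow_mul (by positivity : (0:ℝ) ≤ Real.Gamma m / Real.Gamma (m/2)),
      show (2:ℝ)/m * (m/2) = 1 by field_simp, rpow_one, rpow_one]
    ring
  have hP : (0:ℝ) < π ^ (m/2) := rpow_pos_of_pos pi_pos _
  -- the two space integrals
  have hIU : (∫ x : EuclideanSpace ℝ (Fin n), bubble n 0 1 x ^ (2 * m / (m - 2))) = 2 := by
    simp only [hUpow]
    rw [show (∫ x : EuclideanSpace ℝ (Fin n), (1 + c*‖x‖^2)^(-m))
        = m * (volume (Metric.ball (0:EuclideanSpace ℝ (Fin n)) 1)).toReal *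
          ∫ r in Ioi (0:ℝ), r^(n-1) * ((1 + c*r^2)^(-m)) from radial (fun r => (1 + c*r^2)^(-m))]
    rw [hball, hJ1, hGrec, hcm]
    field_simp
  have hIgrad : (∫ x : EuclideanSpace ℝ (Fin n), ‖gradient (bubble n 0 1) x‖^2)
      = m * (m-2) * c * 2 := by
    simp only [hgn]
    rw [show (∫ x : EuclideanSpace ℝ (Fin n), ((m-2)*c)^2 * (‖x‖^2 * (1+c*‖x‖^2)^(-m)))
        = m * (volume (Metric.ball (0:EuclideanSpace ℝ (Fin n)) 1)).toReal *
          ∫ r in Ioi (0:ℝ), r^(n-1) * (((m-2)*c)^2 * (r^2 * (1+c*r^2)^(-m)))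
        from radial (fun r => ((m-2)*c)^2 * (r^2 * (1+c*r^2)^(-m)))]
    have hpt : ∀ r ∈ Ioi (0:ℝ), r^(n-1) * (((m-2)*c)^2 * (r^2 * (1+c*r^2)^(-m)))
        = ((m-2)*c)^2 * (r^(n+1) * (1+c*r^2)^(-m)) := by
      intro r hr
      rw [show n+1 = (n-1)+2 by omega, pow_add]
      ring
    rw [setIntegral_congr_fun measurableSet_Ioi hpt, integral_const_mul, hJ2]
    have hcsplit : c ^ (-(m/2+1)) = c ^ (-(m/2)) * c⁻¹ := by
      rw [show -(m/2+1) = -(m/2) + (-1) by ring, rpow_add hc, rpow_neg_one]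
    rw [hball, hGrec, hGrec2, hcsplit, hcm]
    field_simp
  have h2exp : (2:ℝ) ^ ((m-2)/m) = 2 / 2^((2:ℝ)/m) := by
    rw [show (m-2)/m = 1 - 2/m by rw [sub_div, div_self hm0.ne'], rpow_sub two_pos, rpow_one]
  constructor
  · rw [hIgrad, hIU, hcdef]
    rw [div_mul_eq_mul_div, one_mul]
    field_simp
  · rw [hIgrad, hIU, hcdef, h2exp]
    field_simp
end

section
/- Let n ≥ 3 be an integer and δ > 0. There exists a constant C > 0 depending only on n and δ such that for every λ ∈ (0, min(1, δ/2)] and every ξ ∈ ∂ℝⁿ₊ with |ξ| ≤ λ: ∫_{ℝⁿ₊ \ B_δ⁺} U_{ξ,λ}(z)^{2*} dz ≤ C λⁿ and ∫_{B_δ⁺} U_{ξ,λ}(z)^{2*} |z| dz ≤ C λ. -/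
open MeasureTheory Real

/-- The last coordinate `xₙ` of a point of `ℝⁿ`. -/
noncomputable def xlast (n : ℕ) (x : EuclideanSpace ℝ (Fin n)) : ℝ :=
  if h : n = 0 then 0 else x ⟨n - 1, by omega⟩

/-- The open upper half-space `ℝⁿ₊ = {x : xₙ > 0}`. -/
def upperHalf (n : ℕ) : Set (EuclideanSpace ℝ (Fin n)) := {x | 0 < xlast n x}

lemma sobolevS_pos {n : ℕ} (hn : 3 ≤ n) : 0 < sobolevS n := by
  have h2 : (2 : ℝ) < n := by exact_mod_cast (show 2 < n by omega)
  have hπ : 0 < π * n * ((n : ℝ) - 2) :=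
    mul_pos (mul_pos pi_pos (by linarith)) (by linarith)
  have hg1 : 0 < Real.Gamma n := Real.Gamma_pos_of_pos (by linarith)
  have hg2 : 0 < Real.Gamma ((n : ℝ) / 2) := Real.Gamma_pos_of_pos (by linarith)
  exact mul_pos (inv_pos.2 hπ) (Real.rpow_pos_of_pos (div_pos hg1 hg2) _)

lemma bubbleC_pos {n : ℕ} (hn : 3 ≤ n) : 0 < bubbleC n := by
  have h2 : (2 : ℝ) < n := by exact_mod_cast (show 2 < n by omega)
  have h1 : (0 : ℝ) < 2 ^ ((2 : ℝ) / n) := Real.rpow_pos_of_pos (by norm_num) _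
  have hS := sobolevS_pos hn
  rw [bubbleC]
  exact one_div_pos.2 (mul_pos (mul_pos (mul_pos h1 (by linarith)) (by linarith)) hS)

set_option maxHeartbeats 2000000 in
/-- for `λ ∈ (0, min(1, δ/2)]` and boundary points `ξ` with
`|ξ| ≤ λ`, the `2*`-mass of `U_{ξ,λ}` outside `B_δ⁺` is `O(λⁿ)` and the
`|z|`-weighted `2*`-mass in `B_δ⁺` is `O(λ)`. -/
theorem mass_estimates (n : ℕ) (hn : 3 ≤ n) (δ : ℝ) (hδ : 0 < δ) :
    ∃ C > (0 : ℝ), ∀ lam : ℝ, 0 < lam → lam ≤ min 1 (δ / 2) →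
      ∀ ξ : EuclideanSpace ℝ (Fin n), xlast n ξ = 0 → ‖ξ‖ ≤ lam →
      (∫ z in upperHalf n \ Metric.ball 0 δ,
          bubble n ξ lam z ^ (2 * (n : ℝ) / ((n : ℝ) - 2))) ≤ C * lam ^ (n : ℝ) ∧
        (∫ z in Metric.ball 0 δ ∩ upperHalf n,
          bubble n ξ lam z ^ (2 * (n : ℝ) / ((n : ℝ) - 2)) * ‖z‖) ≤ C * lam := by
  classical
  have hn0 : n ≠ 0 := by omega
  have h2n : (2 : ℝ) < (n : ℝ) := by exact_mod_cast (show 2 < n by omega)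
  have hne : (n : ℝ) - 2 ≠ 0 := by linarith
  set c := bubbleC n with hc_eq
  have hc : 0 < c := bubbleC_pos hn
  have hfr : Module.finrank ℝ (EuclideanSpace ℝ (Fin n)) = n := finrank_euclideanSpace_fin
  -- measurability of the half space
  have hUH : MeasurableSet (upperHalf n) := by
    have huh : upperHalf n
        = (fun x : EuclideanSpace ℝ (Fin n) => x ⟨n - 1, by omega⟩) ⁻¹' Set.Ioi 0 := by
      ext x; simp [upperHalf, xlast, hn0]
    rw [huh]
    exact measurableSet_Ioi.preimage (by measurability)
  -- the integrable weight (1+‖z‖)^{-2n}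
  have hW : Integrable (fun z : EuclideanSpace ℝ (Fin n) => (1 + ‖z‖) ^ (-(2 * (n : ℝ)))) := by
    apply integrable_one_add_norm
    rw [hfr]; linarith
  set A := ∫ z : EuclideanSpace ℝ (Fin n), (1 + ‖z‖) ^ (-(2 * (n : ℝ))) with hA_eq
  have hA0 : 0 ≤ A := integral_nonneg fun z => Real.rpow_nonneg (by positivity) _
  -- the rescaled profile q
  set m := min 1 c with hm_eq
  have hm : 0 < m := lt_min one_pos hc
  set q : EuclideanSpace ℝ (Fin n) → ℝ :=
    fun w => (((1 : ℝ) + c * ‖w‖ ^ 2) ^ n)⁻¹ * (1 + ‖w‖) with hq_eq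
  have hq_nonneg : ∀ w, 0 ≤ q w := fun w => by positivity
  have hq_cont : Continuous q := by
    apply Continuous.mul _ (continuous_const.add continuous_norm)
    exact Continuous.inv₀ (by fun_prop) (fun w => by positivity)
  have hq_int : Integrable q := by
    have hr : (Module.finrank ℝ (EuclideanSpace ℝ (Fin n)) : ℝ) < 2 * (n : ℝ) - 1 := by
      rw [hfr]; linarith
    refine Integrable.mono' ((integrable_one_add_norm hr).const_mul ((2 / m) ^ n))
      hq_cont.aestronglyMeasurable (ae_of_all _ fun w => ?_)
    set x := 1 + ‖w‖ with hx_eq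
    have hx1 : (1 : ℝ) ≤ x := by rw [hx_eq]; linarith [norm_nonneg w]
    have hx0 : (0 : ℝ) < x := by linarith
    rw [Real.norm_eq_abs, abs_of_nonneg (hq_nonneg w)]
    have hstep1 : m / 2 * x ^ 2 ≤ 1 + c * ‖w‖ ^ 2 := by
      have hm1 : m ≤ 1 := min_le_left _ _
      have hmc : m ≤ c := min_le_right _ _
      have h1 : x ^ 2 ≤ 2 * (1 + ‖w‖ ^ 2) := by
        rw [hx_eq]; nlinarith [sq_nonneg (1 - ‖w‖)]
      have h2 := mul_le_mul_of_nonneg_left h1 (by positivity : (0:ℝ) ≤ m / 2)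
      have h3 := mul_le_mul_of_nonneg_right hmc (sq_nonneg ‖w‖)
      linarith
    have hstep2 : (m / 2) ^ n * x ^ (2 * n) ≤ ((1 : ℝ) + c * ‖w‖ ^ 2) ^ n := by
      have h4 := pow_le_pow_left₀ (by positivity : (0:ℝ) ≤ m / 2 * x ^ 2) hstep1 n
      calc (m / 2) ^ n * x ^ (2 * n) = (m / 2 * x ^ 2) ^ n := by
            rw [mul_pow, pow_mul]
        _ ≤ _ := h4
    have hq_le : q w ≤ (2 / m) ^ n * (x ^ (2 * n - 1))⁻¹ := by
      have hden : (0 : ℝ) < (m / 2) ^ n * x ^ (2 * n) := by positivity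
      have hinv : (((1 : ℝ) + c * ‖w‖ ^ 2) ^ n)⁻¹ ≤ ((m / 2) ^ n * x ^ (2 * n))⁻¹ :=
        inv_anti₀ hden hstep2
      have h5 : q w ≤ ((m / 2) ^ n * x ^ (2 * n))⁻¹ * x := by
        rw [hq_eq]
        exact mul_le_mul_of_nonneg_right hinv (by linarith)
      refine h5.trans (le_of_eq ?_)
      have hxpow : x ^ (2 * n) = x ^ (2 * n - 1) * x := by
        rw [← pow_succ]; congr 1; omega
      rw [hxpow]
      have hmn : (m / 2 : ℝ) ^ n ≠ 0 := by positivity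
      have hxn : (x : ℝ) ^ (2 * n - 1) ≠ 0 := by positivity
      field_simp
      rw [← mul_pow, show m / 2 * (2 / m) = 1 by field_simp, one_pow]
    have hrpow : (x : ℝ) ^ (-(2 * (n : ℝ) - 1)) = (x ^ (2 * n - 1))⁻¹ := by
      rw [show -(2 * (n : ℝ) - 1) = -(((2 * n - 1 : ℕ) : ℝ)) by
            rw [Nat.cast_sub (by omega)]; push_cast; ring,
        Real.rpow_neg hx0.le, Real.rpow_natCast]
    rw [hrpow]
    exact hq_le
  set B := ∫ w, q w with hB_eq
  have hB0 : 0 ≤ B := integral_nonneg hq_nonneg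
  set k := c⁻¹ * 4 * (1 + 1 / δ) ^ 2 with hk_eq
  have hk : 0 < k := by positivity
  set K := k ^ n with hK_eq
  have hK : 0 < K := by positivity
  refine ⟨K * A + B + 1, by nlinarith [mul_nonneg hK.le hA0], ?_⟩
  intro lam hl hl' ξ hξb hξn
  have hl1 : lam ≤ 1 := hl'.trans (min_le_left _ _)
  have hlδ : lam ≤ δ / 2 := hl'.trans (min_le_right _ _)
  set F : EuclideanSpace ℝ (Fin n) → ℝ :=
    fun z => lam ^ n * ((lam ^ 2 + c * ‖z - ξ‖ ^ 2) ^ n)⁻¹ with hF_eq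
  have hD : ∀ z : EuclideanSpace ℝ (Fin n), 0 < lam ^ 2 + c * ‖z - ξ‖ ^ 2 :=
    fun z => by positivity
  have hF_nonneg : ∀ z, 0 ≤ F z := fun z => by positivity
  have hF_cont : Continuous F := by
    apply continuous_const.mul
    exact Continuous.inv₀ (by fun_prop) (fun z => by positivity)
  have hFeq : ∀ z : EuclideanSpace ℝ (Fin n),
      bubble n ξ lam z ^ (2 * (n : ℝ) / ((n : ℝ) - 2)) = F z := by
    intro z
    have hb : (0 : ℝ) ≤ lam / (lam ^ 2 + c * ‖z - ξ‖ ^ 2) := le_of_lt (by positivity)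
    have hexp : ((n : ℝ) - 2) / 2 * (2 * (n : ℝ) / ((n : ℝ) - 2)) = (n : ℝ) := by
      field_simp
    rw [hF_eq]
    simp only [bubble, ← hc_eq]
    rw [← Real.rpow_mul hb, hexp, Real.rpow_natCast, div_pow, div_eq_mul_inv]
  constructor
  · -- first estimate
    set S₁ := upperHalf n \ Metric.ball (0 : EuclideanSpace ℝ (Fin n)) δ with hS₁_eq
    have hS₁ : MeasurableSet S₁ := hUH.diff measurableSet_ball
    have hg_int : Integrable
        (fun z : EuclideanSpace ℝ (Fin n) => lam ^ n * K * (1 + ‖z‖) ^ (-(2 * (n : ℝ)))) :=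
      hW.const_mul _
    have hsub : ∀ z ∈ S₁, F z ≤ lam ^ n * K * (1 + ‖z‖) ^ (-(2 * (n : ℝ))) := by
      intro z hz
      have hzδ : δ ≤ ‖z‖ := by
        have h6 := hz.2
        rw [Metric.mem_ball, dist_zero_right] at h6
        linarith [not_lt.1 h6]
      have h1 : ‖z‖ / 2 ≤ ‖z - ξ‖ := by
        have h7 := norm_sub_norm_le z ξ
        linarith
      have hx0 : (0 : ℝ) < 1 + ‖z‖ := by positivity
      have hkey : ((lam ^ 2 + c * ‖z - ξ‖ ^ 2) ^ n)⁻¹ ≤ K * (1 + ‖z‖) ^ (-(2 * (n : ℝ))) := by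
        rw [show -(2 * (n : ℝ)) = -(((2 * n : ℕ) : ℝ)) by push_cast; ring,
          Real.rpow_neg hx0.le, Real.rpow_natCast, pow_mul]
        set P := (1 + ‖z‖) ^ 2 with hP_eq
        set D := lam ^ 2 + c * ‖z - ξ‖ ^ 2 with hD_eq
        have hDpos : 0 < D := hD z
        have hPpos : 0 < P := by positivity
        have hPD : P ≤ k * D := by
          have hzz : 1 + ‖z‖ ≤ (1 + 1 / δ) * ‖z‖ := by
            have h1δ : (0 : ℝ) < 1 / δ := by positivity
            have h8 := mul_le_mul_of_nonneg_left hzδ h1δ.le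
            have hd1 : (1 / δ) * δ = 1 := by field_simp
            nlinarith
          have hsq1 : P ≤ ((1 + 1 / δ) * ‖z‖) ^ 2 := by
            rw [hP_eq]
            exact pow_le_pow_left₀ (by positivity) hzz 2
          have hsq2 : (‖z‖ / 2) ^ 2 ≤ ‖z - ξ‖ ^ 2 :=
            pow_le_pow_left₀ (by positivity) h1 2
          have hDge : c * (‖z‖ / 2) ^ 2 ≤ D := by
            have h9 := mul_le_mul_of_nonneg_left hsq2 hc.le
            rw [hD_eq]; nlinarith [sq_nonneg lam]
          have h10 := mul_le_mul_of_nonneg_left hDge hk.le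
          have hkc : k * (c * (‖z‖ / 2) ^ 2) = (1 + 1 / δ) ^ 2 * ‖z‖ ^ 2 := by
            rw [hk_eq]; field_simp; ring
          have h11 : P ≤ (1 + 1 / δ) ^ 2 * ‖z‖ ^ 2 := by
            rw [mul_pow] at hsq1; linarith
          rw [← hkc] at h11
          exact h11.trans h10
        have hPDn : P ^ n ≤ K * D ^ n := by
          rw [hK_eq, ← mul_pow]
          exact pow_le_pow_left₀ hPpos.le hPD n
        have hDn : (0 : ℝ) < D ^ n := by positivity
        have hPn : (0 : ℝ) < P ^ n := by positivity
        rw [← div_eq_mul_inv, le_div_iff₀ hPn]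
        calc (D ^ n)⁻¹ * P ^ n ≤ (D ^ n)⁻¹ * (K * D ^ n) :=
              mul_le_mul_of_nonneg_left hPDn (by positivity)
          _ = K := by field_simp
      calc F z = lam ^ n * ((lam ^ 2 + c * ‖z - ξ‖ ^ 2) ^ n)⁻¹ := by rw [hF_eq]
        _ ≤ lam ^ n * (K * (1 + ‖z‖) ^ (-(2 * (n : ℝ)))) :=
            mul_le_mul_of_nonneg_left hkey (by positivity)
        _ = lam ^ n * K * (1 + ‖z‖) ^ (-(2 * (n : ℝ))) := by ring
    have hF_intOn : IntegrableOn F S₁ := by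
      refine Integrable.mono' hg_int.integrableOn hF_cont.aestronglyMeasurable.restrict ?_
      exact (ae_restrict_iff' hS₁).2 (ae_of_all _ fun z hz => by
        rw [Real.norm_eq_abs, abs_of_nonneg (hF_nonneg z)]; exact hsub z hz)
    calc (∫ z in S₁, bubble n ξ lam z ^ (2 * (n : ℝ) / ((n : ℝ) - 2)))
        = ∫ z in S₁, F z := by simp only [hFeq]
      _ ≤ ∫ z in S₁, lam ^ n * K * (1 + ‖z‖) ^ (-(2 * (n : ℝ))) :=
          setIntegral_mono_on hF_intOn hg_int.integrableOn hS₁ hsub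
      _ ≤ ∫ z, lam ^ n * K * (1 + ‖z‖) ^ (-(2 * (n : ℝ))) :=
          setIntegral_le_integral hg_int (ae_of_all _ fun z => by positivity)
      _ = lam ^ n * K * A := by rw [integral_const_mul]
      _ ≤ (K * A + B + 1) * lam ^ (n : ℝ) := by
          rw [Real.rpow_natCast]
          nlinarith [pow_nonneg hl.le n, hB0, mul_nonneg hK.le hA0]
  · -- second estimate
    set S₂ := Metric.ball (0 : EuclideanSpace ℝ (Fin n)) δ ∩ upperHalf n with hS₂_eq
    have hS₂ : MeasurableSet S₂ := measurableSet_ball.inter hUH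
    set h : EuclideanSpace ℝ (Fin n) → ℝ :=
      fun w => lam ^ n * ((lam ^ 2 + c * ‖w‖ ^ 2) ^ n)⁻¹ * (‖w‖ + lam) with hh_eq
    have hh_nonneg : ∀ w, 0 ≤ h w := fun w => by positivity
    have hscale : ∀ w : EuclideanSpace ℝ (Fin n), h (lam • w) = (lam ^ (n - 1))⁻¹ * q w := by
      intro w
      have hnorm : ‖lam • w‖ = lam * ‖w‖ := by
        rw [norm_smul, Real.norm_eq_abs, abs_of_pos hl]
      have hX : (0 : ℝ) < 1 + c * ‖w‖ ^ 2 := by positivity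
      simp only [hh_eq, hq_eq, hnorm]
      have e1 : lam ^ 2 + c * (lam * ‖w‖) ^ 2 = lam ^ 2 * (1 + c * ‖w‖ ^ 2) := by ring
      rw [e1, mul_pow, ← pow_mul]
      have e2 : lam ^ (2 * n) = lam ^ (n + 1) * lam ^ (n - 1) := by
        rw [← pow_add]; congr 1; omega
      rw [e2]
      have hlam0 : lam ≠ 0 := hl.ne'
      have hX0 : ((1 : ℝ) + c * ‖w‖ ^ 2) ^ n ≠ 0 := by positivity
      field_simp
      ring
    have hcomp_int : Integrable (fun w : EuclideanSpace ℝ (Fin n) => h (lam • w)) := by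
      simp only [hscale]; exact hq_int.const_mul _
    have hh_int : Integrable h := (integrable_comp_smul_iff volume h hl.ne').1 hcomp_int
    have hh_val : ∫ w, h w = lam * B := by
      have hcs := Measure.integral_comp_smul_of_nonneg
        (volume : Measure (EuclideanSpace ℝ (Fin n))) h lam (hR := hl.le)
      rw [hfr] at hcs
      simp only [hscale, smul_eq_mul] at hcs
      rw [integral_const_mul, ← hB_eq] at hcs
      have hpow : lam ^ n = lam * lam ^ (n - 1) := by
        rw [← pow_succ']; congr 1; omega
      have hln : lam ^ (n - 1) ≠ 0 := pow_ne_zero _ hl.ne'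
      have hlnn : lam ^ n ≠ 0 := pow_ne_zero _ hl.ne'
      field_simp at hcs
      have h12 : lam * B * lam ^ (n - 1) = (∫ x, h x) * lam ^ (n - 1) := by
        rw [hpow] at hcs; linear_combination hcs
      exact (mul_right_cancel₀ hln h12).symm
    have h₂_int : Integrable (fun z : EuclideanSpace ℝ (Fin n) => h (z - ξ)) :=
      hh_int.comp_sub_right ξ
    have h₂_val : (∫ z : EuclideanSpace ℝ (Fin n), h (z - ξ)) = lam * B := by
      rw [integral_sub_right_eq_self h ξ]; exact hh_val
    have hbound : ∀ z ∈ S₂, F z * ‖z‖ ≤ h (z - ξ) := by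
      intro z _
      have hz : ‖z‖ ≤ ‖z - ξ‖ + lam := by
        calc ‖z‖ = ‖z - ξ + ξ‖ := by rw [sub_add_cancel]
          _ ≤ ‖z - ξ‖ + ‖ξ‖ := norm_add_le _ _
          _ ≤ ‖z - ξ‖ + lam := by linarith
      simp only [hh_eq, hF_eq]
      exact mul_le_mul_of_nonneg_left hz (by positivity)
    have hFz_intOn : IntegrableOn (fun z => F z * ‖z‖) S₂ := by
      refine Integrable.mono' h₂_int.integrableOn
        ((hF_cont.mul continuous_norm).aestronglyMeasurable.restrict) ?_
      exact (ae_restrict_iff' hS₂).2 (ae_of_all _ fun z hz => by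
        rw [Real.norm_eq_abs, abs_of_nonneg (mul_nonneg (hF_nonneg z) (norm_nonneg z))]
        exact hbound z hz)
    calc (∫ z in S₂, bubble n ξ lam z ^ (2 * (n : ℝ) / ((n : ℝ) - 2)) * ‖z‖)
        = ∫ z in S₂, F z * ‖z‖ := by simp only [hFeq]
      _ ≤ ∫ z in S₂, h (z - ξ) :=
          setIntegral_mono_on hFz_intOn h₂_int.integrableOn hS₂ hbound
      _ ≤ ∫ z, h (z - ξ) := setIntegral_le_integral h₂_int (ae_of_all _ fun z => hh_nonneg _)
      _ = lam * B := h₂_val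
      _ ≤ (K * A + B + 1) * lam := by nlinarith [mul_nonneg hK.le hA0]
end

section
/- Let δ > 0. If n ≥ 5, there exists C > 0 depending only on n and δ such that for every λ ∈ (0, 1] and ξ ∈ ∂ℝⁿ₊ with |ξ| ≤ λ, ∫_{B_δ⁺} |∇U_{ξ,λ}(z)|² |z|² dz ≤ C λ². If n = 4, there exists C > 0 depending only on δ such that for every λ ∈ (0, 1/2] and ξ ∈ ∂ℝ⁴₊ with |ξ| ≤ λ, ∫_{B_δ⁺} |∇U_{ξ,λ}(z)|² |z|² dz ≤ C λ² log(1/λ). -/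
set_option maxHeartbeats 1000000
set_option synthInstance.maxHeartbeats 1000000


open MeasureTheory Real

lemma bubble_grad_norm_le {n : ℕ} (hn : 3 ≤ n) (hc : 0 < bubbleC n) {lam : ℝ} (hl : 0 < lam)
    (ξ z : EuclideanSpace ℝ (Fin n)) :
    ‖gradient (bubble n ξ lam) z‖ ≤
      ((n:ℝ) - 2) * bubbleC n * lam ^ (((n:ℝ)-2)/2) * ‖z - ξ‖ *
        (lam^2 + bubbleC n * ‖z - ξ‖^2) ^ (-(((n:ℝ)-2)/2) - 1) := by
  set c := bubbleC n with hcdef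
  set p : ℝ := ((n:ℝ)-2)/2 with hpdef
  have hp : 0 < p := by
    have : (3:ℝ) ≤ n := by exact_mod_cast hn
    rw [hpdef]; linarith
  set r := ‖z - ξ‖ with hrdef
  set D : ℝ := lam^2 + c * r^2 with hDdef
  have hD : 0 < D := by positivity
  have hq : HasFDerivAt (fun x : EuclideanSpace ℝ (Fin n) => ‖x - ξ‖^2)
      (2 • (innerSL ℝ (z - ξ))) z := by
    have h := ((hasFDerivAt_id z).sub_const ξ).norm_sq
    simpa using h
  have hu : HasDerivAt (fun t : ℝ => lam^2 + c * t) c (‖z - ξ‖^2) := by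
    simpa using ((hasDerivAt_id (‖z - ξ‖^2)).const_mul c).const_add (lam^2)
  have hDq : lam^2 + c * ‖z - ξ‖^2 ≠ 0 := by positivity
  have hdiv : HasDerivAt (fun t : ℝ => lam / (lam^2 + c * t))
      ((0 * (lam^2 + c * ‖z - ξ‖^2) - lam * c) / (lam^2 + c * ‖z - ξ‖^2)^2) (‖z - ξ‖^2) :=
    (hasDerivAt_const _ lam).div hu hDq
  have hbase : lam / (lam^2 + c * ‖z - ξ‖^2) ≠ 0 :=
    ne_of_gt (div_pos hl (by positivity))
  have hphi : HasDerivAt (fun t : ℝ => (lam / (lam^2 + c * t)) ^ p)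
      ((0 * (lam^2 + c * ‖z - ξ‖^2) - lam * c) / (lam^2 + c * ‖z - ξ‖^2)^2 * p *
        (lam / (lam^2 + c * ‖z - ξ‖^2)) ^ (p - 1)) (‖z - ξ‖^2) :=
    hdiv.rpow_const (Or.inl hbase)
  set d : ℝ := (0 * (lam^2 + c * ‖z - ξ‖^2) - lam * c) / (lam^2 + c * ‖z - ξ‖^2)^2 * p *
        (lam / (lam^2 + c * ‖z - ξ‖^2)) ^ (p - 1) with hddef
  have hF : HasFDerivAt (bubble n ξ lam) (d • (2 • (innerSL ℝ (z - ξ)))) z := by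
    have := hphi.comp_hasFDerivAt z hq
    exact this
  have hgrad : gradient (bubble n ξ lam) z
      = (InnerProductSpace.toDual ℝ _).symm (d • (2 • (innerSL ℝ (z - ξ)))) := by
    rw [gradient, hF.fderiv]
  rw [hgrad, LinearIsometryEquiv.norm_map]
  have hdsimp : d = -(lam * c / D^2 * p * (lam / D)^(p-1)) := by rw [hddef]; ring
  have h2s : (2 : ℕ) • (innerSL ℝ (z - ξ)) = (2:ℝ) • (innerSL ℝ (z - ξ)) :=
    (Nat.cast_smul_eq_nsmul ℝ 2 _).symm
  have hnormQ : ‖d • (2 • (innerSL ℝ (z - ξ)))‖ = |d| * (2 * r) := by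
    rw [h2s, smul_smul, norm_smul (d*2) ((innerSL ℝ) (z-ξ)), innerSL_apply_norm,
      Real.norm_eq_abs, abs_mul]
    rw [abs_two]
    ring
  rw [hnormQ]
  apply le_of_eq
  have habs : |d| = lam * c / D^2 * p * (lam / D)^(p-1) := by
    rw [hdsimp, abs_neg]
    exact abs_of_nonneg (mul_nonneg (mul_nonneg (by positivity) hp.le)
      (rpow_nonneg (le_of_lt (div_pos hl hD)) _))
  rw [habs]
  have h1 : (lam / D)^(p-1) = lam^(p-1) * (D^(p-1))⁻¹ := by
    rw [Real.div_rpow hl.le hD.le, div_eq_mul_inv]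
  have h2 : lam^(p-1) * lam = lam^p := by
    rw [← Real.rpow_add_one hl.ne']; ring_nf
  have h3 : (D^(p-1))⁻¹ * ((D^2)⁻¹) = D^(-p-1) := by
    rw [← Real.rpow_natCast D 2, ← Real.rpow_neg hD.le, ← Real.rpow_neg hD.le,
      ← Real.rpow_add hD]
    norm_num
    ring_nf
  have hn2 : (n:ℝ) - 2 = 2 * p := by rw [hpdef]; ring
  rw [hn2, h1]
  rw [← h2, ← h3]
  ring

lemma bubble_integrand_le {n : ℕ} (hn : 3 ≤ n) (hc : 0 < bubbleC n) {lam : ℝ} (hl : 0 < lam)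
    {ξ : EuclideanSpace ℝ (Fin n)} (hξ : ‖ξ‖ ≤ lam) (z : EuclideanSpace ℝ (Fin n)) :
    ‖gradient (bubble n ξ lam) z‖^2 * ‖z‖^2 ≤
      (((n:ℝ)-2) * bubbleC n * (2*(1+(bubbleC n)⁻¹)))^2 * lam^((n:ℝ)-2) *
        (lam^2 + bubbleC n * ‖z-ξ‖^2)^((2:ℝ)-(n:ℝ)) := by
  set c := bubbleC n with hcdef
  set p : ℝ := ((n:ℝ)-2)/2 with hpdef
  have hp : 0 < p := by
    have : (3:ℝ) ≤ n := by exact_mod_cast hn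
    rw [hpdef]; linarith
  set r := ‖z - ξ‖ with hrdef
  have hr : 0 ≤ r := norm_nonneg _
  set D : ℝ := lam^2 + c * r^2 with hDdef
  have hD : 0 < D := by positivity
  set A0 : ℝ := ((n:ℝ)-2) * c with hA0def
  have hA0 : 0 ≤ A0 := by
    apply mul_nonneg _ hc.le
    have : (3:ℝ) ≤ n := by exact_mod_cast hn
    linarith
  set M : ℝ := 2*(1+c⁻¹) with hMdef
  have hM : 0 < M := by rw [hMdef]; positivity
  have hB : ‖gradient (bubble n ξ lam) z‖ ≤ A0 * lam ^ p * r * D ^ (-p-1) :=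
    bubble_grad_norm_le hn hc hl ξ z
  have hz : ‖z‖ ≤ r + lam := by
    calc ‖z‖ = ‖(z - ξ) + ξ‖ := by rw [sub_add_cancel]
    _ ≤ ‖z - ξ‖ + ‖ξ‖ := norm_add_le _ _
    _ ≤ r + lam := by rw [hrdef]; exact add_le_add le_rfl hξ
  have hrl : 0 ≤ r + lam := by positivity
  have key : ‖gradient (bubble n ξ lam) z‖^2 * ‖z‖^2 ≤
      (A0 * lam ^ p * r * D ^ (-p-1))^2 * (r + lam)^2 := by
    apply mul_le_mul (pow_le_pow_left₀ (norm_nonneg _) hB 2)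
      (pow_le_pow_left₀ (norm_nonneg _) hz 2) (by positivity) (by positivity)
  refine key.trans ?_
  have hrrl : r * (r + lam) ≤ M * D := by
    have h1 : r^2 ≤ c⁻¹ * D := by
      rw [hDdef]
      rw [le_inv_mul_iff₀ hc]
      nlinarith [sq_nonneg lam]
    have h2 : lam^2 ≤ D := by rw [hDdef]; nlinarith [mul_nonneg hc.le (sq_nonneg r)]
    have h3 : (0:ℝ) ≤ (r - lam)^2 := sq_nonneg _
    have hci : 0 < c⁻¹ := by positivity
    rw [hMdef]
    nlinarith
  have hsq : r^2 * (r + lam)^2 ≤ (M * D)^2 := by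
    calc r^2 * (r+lam)^2 = (r * (r+lam))^2 := by ring
    _ ≤ (M*D)^2 := pow_le_pow_left₀ (by positivity) hrrl 2
  have hlam2 : (lam ^ p)^2 = lam ^ ((n:ℝ)-2) := by
    rw [← Real.rpow_natCast (lam^p) 2, ← Real.rpow_mul hl.le]
    congr 1
    rw [hpdef]; push_cast; ring
  have hD2 : (D ^ (-p-1))^2 * D^2 = D ^ ((2:ℝ)-(n:ℝ)) := by
    rw [← Real.rpow_natCast (D^(-p-1)) 2, ← Real.rpow_mul hD.le, ← Real.rpow_natCast D 2,
      ← Real.rpow_add hD]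
    congr 1
    rw [hpdef]; push_cast; ring
  calc (A0 * lam ^ p * r * D ^ (-p-1))^2 * (r + lam)^2
      = A0^2 * (lam^p)^2 * (D^(-p-1))^2 * (r^2 * (r+lam)^2) := by ring
    _ ≤ A0^2 * (lam^p)^2 * (D^(-p-1))^2 * (M*D)^2 := by
        apply mul_le_mul_of_nonneg_left hsq (by positivity)
    _ = (A0 * M)^2 * (lam^p)^2 * ((D^(-p-1))^2 * D^2) := by ring
    _ = (A0 * M)^2 * lam ^ ((n:ℝ)-2) * D ^ ((2:ℝ)-(n:ℝ)) := by rw [hlam2, hD2]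

lemma radial_eq {n : ℕ} (hn : 4 ≤ n) (f : ℝ → ℝ)
    (ξ : EuclideanSpace ℝ (Fin n)) (R : ℝ) (hR : 0 ≤ R) :
    ∫ z in Metric.ball ξ R, f ‖z - ξ‖ =
      (n : ℝ) * (volume (Metric.ball (0:EuclideanSpace ℝ (Fin n)) 1)).toReal *
        ∫ r in (0:ℝ)..R, r^(n-1) * f r := by
  haveI : Nontrivial (EuclideanSpace ℝ (Fin n)) :=
    Module.nontrivial_of_finrank_pos (R := ℝ) (by rw [finrank_euclideanSpace_fin]; omega)
  have h1 : ∫ z in Metric.ball ξ R, f ‖z - ξ‖ =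
      ∫ z : EuclideanSpace ℝ (Fin n), (Set.Iio R).indicator f ‖z‖ := by
    rw [← integral_indicator measurableSet_ball]
    rw [← integral_add_right_eq_self _ ξ]
    congr 1
    funext x
    by_cases hx : ‖x‖ < R
    · rw [Set.indicator_of_mem, Set.indicator_of_mem]
      · simp
      · simpa using hx
      · simp [Metric.mem_ball, dist_eq_norm, hx]
    · rw [Set.indicator_of_notMem, Set.indicator_of_notMem]
      · simpa using hx
      · simp [Metric.mem_ball, dist_eq_norm, hx]
  rw [h1, integral_fun_norm_addHaar volume ((Set.Iio R).indicator f)]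
  rw [finrank_euclideanSpace_fin, nsmul_eq_mul, smul_eq_mul]
  rw [mul_assoc]
  congr 1
  have h2 : ∀ y : ℝ, y ^ (n-1) • (Set.Iio R).indicator f y
      = (Set.Iio R).indicator (fun r => r^(n-1) * f r) y := by
    intro y
    by_cases hy : y ∈ Set.Iio R
    · rw [Set.indicator_of_mem hy, Set.indicator_of_mem hy, smul_eq_mul]
    · rw [Set.indicator_of_notMem hy, Set.indicator_of_notMem hy, smul_zero]
  rw [MeasureTheory.integral_congr_ae (Filter.Eventually.of_forall h2)]
  rw [setIntegral_indicator measurableSet_Iio]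
  have : Set.Ioi (0:ℝ) ∩ Set.Iio R = Set.Ioo 0 R := by ext x; simp [Set.mem_Ioo, and_comm]
  rw [this, ← integral_Ioc_eq_integral_Ioo, ← intervalIntegral.integral_of_le hR]
  rfl

lemma Gcont {n : ℕ} {c lam : ℝ} (hc : 0 < c) (hl : 0 < lam) :
    Continuous (fun r : ℝ => r^(n-1) * (lam^2 + c*r^2)^((2:ℝ)-(n:ℝ))) := by
  have hbase : Continuous fun r : ℝ => lam^2 + c*r^2 := by continuity
  exact (continuous_pow _).mul (hbase.rpow_const (fun r => Or.inl (by positivity)))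

lemma piece1 {n : ℕ} (hn : 4 ≤ n) {c lam : ℝ} (hc : 0 < c) (hl : 0 < lam) :
    ∫ r in (0:ℝ)..lam, r^(n-1) * (lam^2 + c*r^2)^((2:ℝ)-(n:ℝ)) ≤ lam^((4:ℝ)-n) / n := by
  have hmono : ∫ r in (0:ℝ)..lam, r^(n-1) * (lam^2 + c*r^2)^((2:ℝ)-(n:ℝ))
      ≤ ∫ r in (0:ℝ)..lam, r^(n-1) * (lam^2)^((2:ℝ)-(n:ℝ)) := by
    apply intervalIntegral.integral_mono_on hl.le ((Gcont hc hl).intervalIntegrable _ _)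
      (((continuous_pow _).mul continuous_const).intervalIntegrable _ _)
    intro x hx
    apply mul_le_mul_of_nonneg_left _ (pow_nonneg hx.1 _)
    apply rpow_le_rpow_of_nonpos (by positivity) (by nlinarith [sq_nonneg x])
    have : (4:ℝ) ≤ n := by exact_mod_cast hn
    linarith
  refine hmono.trans ?_
  rw [intervalIntegral.integral_mul_const, integral_pow]
  have hnn : n - 1 + 1 = n := by omega
  rw [hnn, show ((n-1:ℕ):ℝ)+1 = (n:ℝ) by rw [Nat.cast_sub (by omega : 1 ≤ n)]; ring]
  rw [show (0:ℝ)^n = 0 from zero_pow (by omega), sub_zero]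
  apply le_of_eq
  rw [div_mul_eq_mul_div, mul_comm]
  congr 1
  rw [← Real.rpow_natCast lam 2, ← Real.rpow_mul hl.le, ← Real.rpow_natCast lam n,
    ← Real.rpow_add hl]
  congr 1
  push_cast; ring

lemma piece2_5 {n : ℕ} (hn : 5 ≤ n) {c lam R : ℝ} (hc : 0 < c) (hl : 0 < lam) (hlR : lam ≤ R) :
    ∫ r in lam..R, r^(n-1) * (lam^2 + c*r^2)^((2:ℝ)-(n:ℝ))
      ≤ c^((2:ℝ)-n) * lam^((4:ℝ)-n) / ((n:ℝ)-4) := by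
  have hn5 : (5:ℝ) ≤ n := by exact_mod_cast hn
  have hmono : ∫ r in lam..R, r^(n-1) * (lam^2 + c*r^2)^((2:ℝ)-(n:ℝ))
      ≤ ∫ r in lam..R, c^((2:ℝ)-n) * r^((3:ℝ)-n) := by
    apply intervalIntegral.integral_mono_on hlR ((Gcont hc hl).intervalIntegrable _ _)
    · apply ContinuousOn.intervalIntegrable
      apply ContinuousOn.mul continuousOn_const
      apply ContinuousOn.rpow_const continuousOn_id
      intro x hx
      rw [Set.uIcc_of_le hlR] at hx
      exact Or.inl (by simp; nlinarith [hx.1])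
    intro x hx
    have hx1 : lam ≤ x := hx.1
    have hxpos : 0 < x := lt_of_lt_of_le hl hx1
    have h1 : (lam^2 + c*x^2)^((2:ℝ)-(n:ℝ)) ≤ (c*x^2)^((2:ℝ)-(n:ℝ)) := by
      apply rpow_le_rpow_of_nonpos (by positivity) (by nlinarith [sq_nonneg lam]) (by linarith)
    calc x^(n-1) * (lam^2 + c*x^2)^((2:ℝ)-(n:ℝ)) ≤ x^(n-1) * (c*x^2)^((2:ℝ)-(n:ℝ)) :=
          mul_le_mul_of_nonneg_left h1 (pow_nonneg hxpos.le _)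
      _ = c^((2:ℝ)-n) * x^((3:ℝ)-n) := by
          rw [Real.mul_rpow hc.le (sq_nonneg x), ← Real.rpow_natCast x 2,
            ← Real.rpow_mul hxpos.le, ← Real.rpow_natCast x (n-1),
            mul_comm (x ^ (((n-1:ℕ)):ℝ)), mul_assoc, ← Real.rpow_add hxpos]
          congr 1
          rw [Nat.cast_sub (by omega : 1 ≤ n)]
          push_cast; ring
  refine hmono.trans ?_
  rw [intervalIntegral.integral_const_mul, integral_rpow]
  · have h4 : (3:ℝ) - n + 1 = 4 - n := by ring
    rw [h4]
    rw [mul_div_assoc]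
    apply mul_le_mul_of_nonneg_left _ (rpow_nonneg hc.le _)
    have hk : (0:ℝ) < (n:ℝ) - 4 := by linarith
    have hb : 0 ≤ R ^ ((4:ℝ)-(n:ℝ)) := rpow_nonneg (lt_of_lt_of_le hl hlR).le _
    have heq : ((4:ℝ)-(n:ℝ))⁻¹ = -(((n:ℝ)-4)⁻¹) := by
      rw [show (4:ℝ)-(n:ℝ) = -((n:ℝ)-4) by ring, inv_neg]
    rw [div_eq_mul_inv, div_eq_mul_inv, heq]
    nlinarith [mul_nonneg hb (inv_pos.mpr hk).le]
  · right
    constructor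
    · intro h; have : (3:ℝ) - n = -1 := h; linarith
    · rw [Set.uIcc_of_le hlR]; intro h; exact absurd h.1 (by linarith)

lemma piece2_4 {c lam R : ℝ} (hc : 0 < c) (hl : 0 < lam) (hlR : lam ≤ R) :
    ∫ r in lam..R, r^(4-1 : ℕ) * (lam^2 + c*r^2)^((2:ℝ)-((4:ℕ):ℝ))
      ≤ c⁻¹ * c⁻¹ * (Real.log R + Real.log (1/lam)) := by
  have hR : 0 < R := lt_of_lt_of_le hl hlR
  have hmono : ∫ r in lam..R, r^(4-1 : ℕ) * (lam^2 + c*r^2)^((2:ℝ)-((4:ℕ):ℝ))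
      ≤ ∫ r in lam..R, c⁻¹ * c⁻¹ * r⁻¹ := by
    apply intervalIntegral.integral_mono_on hlR ((Gcont hc hl).intervalIntegrable _ _)
    · apply ContinuousOn.intervalIntegrable
      apply ContinuousOn.mul continuousOn_const
      apply ContinuousOn.inv₀ continuousOn_id
      intro x hx
      rw [Set.uIcc_of_le hlR] at hx
      exact ne_of_gt (lt_of_lt_of_le hl hx.1)
    intro x hx
    have hxpos : 0 < x := lt_of_lt_of_le hl hx.1
    have h1 : (lam^2 + c*x^2)^((2:ℝ)-((4:ℕ):ℝ)) ≤ (c*x^2)^((2:ℝ)-((4:ℕ):ℝ)) := by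
      apply rpow_le_rpow_of_nonpos (by positivity) (by nlinarith [sq_nonneg lam]) (by norm_num)
    calc x^(4-1:ℕ) * (lam^2 + c*x^2)^((2:ℝ)-((4:ℕ):ℝ)) ≤ x^(4-1:ℕ) * (c*x^2)^((2:ℝ)-((4:ℕ):ℝ)) :=
          mul_le_mul_of_nonneg_left h1 (pow_nonneg hxpos.le _)
      _ = c⁻¹ * c⁻¹ * x⁻¹ := by
          rw [show (2:ℝ)-((4:ℕ):ℝ) = (-2 : ℝ) by norm_num,
            show (-2:ℝ) = ((-2 : ℤ) : ℝ) by norm_num, Real.rpow_intCast]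
          have hcx : c * x^2 ≠ 0 := by positivity
          rw [zpow_neg, zpow_two]
          field_simp
  refine hmono.trans ?_
  rw [intervalIntegral.integral_const_mul]
  apply mul_le_mul_of_nonneg_left _ (by positivity)
  have : ∫ r in lam..R, r⁻¹ = Real.log (R / lam) := by
    simp only [← one_div]
    apply integral_one_div
    rw [Set.uIcc_of_le hlR]
    intro h
    exact absurd h.1 (by linarith)
  rw [this, Real.log_div hR.ne' hl.ne', Real.log_div one_ne_zero hl.ne', Real.log_one]
  linarith

lemma main_bound {n : ℕ} (hn : 4 ≤ n) (hc : 0 < bubbleC n) (δ : ℝ) (hδ : 0 < δ) {lam : ℝ}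
    (hl : 0 < lam) (hl1 : lam ≤ 1) {ξ : EuclideanSpace ℝ (Fin n)} (hξ : ‖ξ‖ ≤ lam) :
    ∫ z in Metric.ball 0 δ ∩ upperHalf n, ‖gradient (bubble n ξ lam) z‖^2 * ‖z‖^2
      ≤ ((n:ℝ) * (volume (Metric.ball (0:EuclideanSpace ℝ (Fin n)) 1)).toReal) *
          ((((n:ℝ)-2) * bubbleC n * (2*(1+(bubbleC n)⁻¹)))^2 * lam^((n:ℝ)-2) *
            ∫ r in (0:ℝ)..(δ+1), r^(n-1) * (lam^2 + bubbleC n * r^2)^((2:ℝ)-(n:ℝ))) := by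
  set c := bubbleC n with hcdef
  set K : ℝ := (((n:ℝ)-2) * c * (2*(1+c⁻¹)))^2 with hKdef
  have hK0 : 0 ≤ K := sq_nonneg _
  set R : ℝ := δ + 1 with hRdef
  have hR0 : (0:ℝ) ≤ R := by rw [hRdef]; linarith
  set f : ℝ → ℝ := fun t => K * lam^((n:ℝ)-2) * (lam^2 + c*t^2)^((2:ℝ)-(n:ℝ)) with hfdef
  have hfc : Continuous f := by
    apply continuous_const.mul
    have hbase : Continuous fun t : ℝ => lam^2 + c*t^2 := by continuity
    exact hbase.rpow_const (fun t => Or.inl (by positivity))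
  have hf0 : ∀ t, 0 ≤ f t := fun t => by
    apply mul_nonneg (mul_nonneg hK0 (rpow_nonneg hl.le _)) (rpow_nonneg (by positivity) _)
  have hgc : Continuous fun z : EuclideanSpace ℝ (Fin n) => f ‖z - ξ‖ :=
    hfc.comp ((continuous_id.sub continuous_const).norm)
  have hsub : Metric.ball 0 δ ∩ upperHalf n ⊆ Metric.ball ξ R := by
    intro z hz
    have h1 : ‖z‖ < δ := by simpa [Metric.mem_ball, dist_eq_norm] using hz.1
    rw [Metric.mem_ball, dist_eq_norm]
    calc ‖z - ξ‖ ≤ ‖z‖ + ‖ξ‖ := norm_sub_le _ _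
      _ < δ + 1 := by have := hξ; linarith
  have hIcb : IntegrableOn (fun z : EuclideanSpace ℝ (Fin n) => f ‖z - ξ‖)
      (Metric.closedBall ξ R) :=
    hgc.continuousOn.integrableOn_compact (isCompact_closedBall _ _)
  have hIball : IntegrableOn (fun z : EuclideanSpace ℝ (Fin n) => f ‖z - ξ‖)
      (Metric.ball ξ R) := hIcb.mono_set Metric.ball_subset_closedBall
  have hIs : IntegrableOn (fun z : EuclideanSpace ℝ (Fin n) => f ‖z - ξ‖)
      (Metric.ball 0 δ ∩ upperHalf n) :=
    hIcb.mono_set (hsub.trans Metric.ball_subset_closedBall)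
  have step1 : ∫ z in Metric.ball 0 δ ∩ upperHalf n, ‖gradient (bubble n ξ lam) z‖^2 * ‖z‖^2
      ≤ ∫ z in Metric.ball 0 δ ∩ upperHalf n, f ‖z - ξ‖ := by
    apply integral_mono_of_nonneg (Filter.Eventually.of_forall (fun z => by positivity)) hIs
    apply Filter.Eventually.of_forall
    intro z
    exact bubble_integrand_le (by omega) hc hl hξ z
  have step2 : ∫ z in Metric.ball 0 δ ∩ upperHalf n, f ‖z - ξ‖
      ≤ ∫ z in Metric.ball ξ R, f ‖z - ξ‖ := by
    apply setIntegral_mono_set hIball (Filter.Eventually.of_forall (fun z => hf0 _))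
      (HasSubset.Subset.eventuallyLE hsub)
  refine (step1.trans step2).trans ?_
  rw [radial_eq hn f ξ R hR0]
  apply le_of_eq
  congr 1
  rw [hfdef]
  have : ∀ r : ℝ, r^(n-1) * (K * lam^((n:ℝ)-2) * (lam^2 + c*r^2)^((2:ℝ)-(n:ℝ)))
      = (K * lam^((n:ℝ)-2)) * (r^(n-1) * (lam^2 + c*r^2)^((2:ℝ)-(n:ℝ))) := fun r => by ring
  simp only [this]
  rw [intervalIntegral.integral_const_mul]

/-- `|z|²`-weighted Dirichlet energy of `U_{ξ,λ}` in `B_δ⁺` for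
boundary points `ξ` with `|ξ| ≤ λ`: it is `O(λ²)` when `n ≥ 5`, and
`O(λ² log(1/λ))` when `n = 4`. -/
theorem weighted_energy (n : ℕ) (δ : ℝ) (hδ : 0 < δ) :
    (5 ≤ n → ∃ C > (0 : ℝ), ∀ lam : ℝ, 0 < lam → lam ≤ 1 →
      ∀ ξ : EuclideanSpace ℝ (Fin n), xlast n ξ = 0 → ‖ξ‖ ≤ lam →
        (∫ z in Metric.ball 0 δ ∩ upperHalf n,
          ‖gradient (bubble n ξ lam) z‖ ^ 2 * ‖z‖ ^ 2) ≤ C * lam ^ 2) ∧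
    (n = 4 → ∃ C > (0 : ℝ), ∀ lam : ℝ, 0 < lam → lam ≤ 1 / 2 →
      ∀ ξ : EuclideanSpace ℝ (Fin n), xlast n ξ = 0 → ‖ξ‖ ≤ lam →
        (∫ z in Metric.ball 0 δ ∩ upperHalf n,
          ‖gradient (bubble n ξ lam) z‖ ^ 2 * ‖z‖ ^ 2) ≤
            C * lam ^ 2 * Real.log (1 / lam)) := by
  constructor
  · -- case n ≥ 5
    intro hn5
    have hn4 : 4 ≤ n := by omega
    have hc : 0 < bubbleC n := bubbleC_pos (by omega)
    set c := bubbleC n with hcdef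
    set A : ℝ := (n:ℝ) * (volume (Metric.ball (0:EuclideanSpace ℝ (Fin n)) 1)).toReal with hA
    have hA0 : 0 ≤ A := mul_nonneg (Nat.cast_nonneg n) ENNReal.toReal_nonneg
    set K : ℝ := (((n:ℝ)-2) * c * (2*(1+c⁻¹)))^2 with hK
    have hK0 : 0 ≤ K := sq_nonneg _
    have hn4R : (0:ℝ) < (n:ℝ) - 4 := by
      have : (5:ℝ) ≤ n := by exact_mod_cast hn5
      linarith
    set br : ℝ := 1/(n:ℝ) + c^((2:ℝ)-(n:ℝ))/((n:ℝ)-4) with hbr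
    have hbr0 : 0 ≤ br := by
      apply add_nonneg (by positivity) (div_nonneg (rpow_nonneg hc.le _) hn4R.le)
    refine ⟨A*K*br + 1, by nlinarith [mul_nonneg (mul_nonneg hA0 hK0) hbr0], ?_⟩
    intro lam hl hl1 ξ hξ0 hξ
    have hlR : lam ≤ δ + 1 := by linarith
    have hI : ∫ r in (0:ℝ)..(δ+1), r^(n-1) * (lam^2 + c*r^2)^((2:ℝ)-(n:ℝ))
        ≤ lam^((4:ℝ)-(n:ℝ)) * br := by
      rw [← intervalIntegral.integral_add_adjacent_intervals
        ((Gcont hc hl).intervalIntegrable 0 lam) ((Gcont hc hl).intervalIntegrable lam (δ+1))]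
      calc _ ≤ lam^((4:ℝ)-(n:ℝ))/n + c^((2:ℝ)-(n:ℝ))*lam^((4:ℝ)-(n:ℝ))/((n:ℝ)-4) :=
            add_le_add (piece1 hn4 hc hl) (piece2_5 hn5 hc hl hlR)
        _ = lam^((4:ℝ)-(n:ℝ)) * br := by rw [hbr]; ring
    refine (main_bound hn4 hc δ hδ hl hl1 hξ).trans ?_
    have hlam2 : lam^((n:ℝ)-2) * lam^((4:ℝ)-(n:ℝ)) = lam^(2:ℕ) := by
      rw [← Real.rpow_natCast lam 2, ← Real.rpow_add hl]
      norm_num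
    calc A * (K * lam^((n:ℝ)-2) *
          ∫ r in (0:ℝ)..(δ+1), r^(n-1) * (lam^2 + c*r^2)^((2:ℝ)-(n:ℝ)))
        ≤ A * (K * lam^((n:ℝ)-2) * (lam^((4:ℝ)-(n:ℝ)) * br)) := by
          apply mul_le_mul_of_nonneg_left _ hA0
          apply mul_le_mul_of_nonneg_left hI (mul_nonneg hK0 (rpow_nonneg hl.le _))
      _ = (A*K*br) * (lam^((n:ℝ)-2) * lam^((4:ℝ)-(n:ℝ))) := by ring
      _ = (A*K*br) * lam^2 := by rw [hlam2]
      _ ≤ (A*K*br + 1) * lam^2 := by nlinarith [sq_nonneg lam]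
  · -- case n = 4
    intro hn4'
    subst hn4'
    have hc : 0 < bubbleC 4 := bubbleC_pos (by omega)
    set c := bubbleC 4 with hcdef
    set A : ℝ := ((4:ℕ):ℝ) * (volume (Metric.ball (0:EuclideanSpace ℝ (Fin 4)) 1)).toReal with hA
    have hA0 : 0 ≤ A := mul_nonneg (Nat.cast_nonneg 4) ENNReal.toReal_nonneg
    set K : ℝ := ((((4:ℕ):ℝ)-2) * c * (2*(1+c⁻¹)))^2 with hK
    have hK0 : 0 ≤ K := sq_nonneg _
    have hlog2 : (0:ℝ) < Real.log 2 := Real.log_pos one_lt_two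
    have hlogR : 0 ≤ Real.log (δ+1) := Real.log_nonneg (by linarith)
    set a : ℝ := 1/4 + c⁻¹*c⁻¹*Real.log (δ+1) with ha
    have ha0 : 0 ≤ a := by positivity
    set b : ℝ := c⁻¹*c⁻¹ with hb
    have hb0 : 0 ≤ b := by positivity
    have hCpos : (0:ℝ) < A*K*(a/Real.log 2 + b) + 1 := by
      nlinarith [mul_nonneg (mul_nonneg hA0 hK0) (add_nonneg (div_nonneg ha0 hlog2.le) hb0)]
    refine ⟨A*K*(a/Real.log 2 + b) + 1, hCpos, ?_⟩
    intro lam hl hl12 ξ hξ0 hξ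
    have hl1 : lam ≤ 1 := by linarith
    have hlR : lam ≤ δ + 1 := by linarith
    set L : ℝ := Real.log (1/lam) with hL
    have hLlog2 : Real.log 2 ≤ L := by
      rw [hL]
      apply Real.log_le_log two_pos
      rw [le_div_iff₀ hl]
      linarith
    have hL0 : 0 < L := lt_of_lt_of_le hlog2 hLlog2
    have hI : ∫ r in (0:ℝ)..(δ+1), r^(4-1:ℕ) * (lam^2 + c*r^2)^((2:ℝ)-((4:ℕ):ℝ))
        ≤ a + b * L := by
      rw [← intervalIntegral.integral_add_adjacent_intervals
        ((Gcont hc hl).intervalIntegrable 0 lam) ((Gcont hc hl).intervalIntegrable lam (δ+1))]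
      have h1 : ∫ r in (0:ℝ)..lam, r^(4-1:ℕ) * (lam^2 + c*r^2)^((2:ℝ)-((4:ℕ):ℝ)) ≤ 1/4 := by
        have := piece1 (le_refl 4) hc hl
        have he : lam^((4:ℝ)-((4:ℕ):ℝ)) = 1 := by
          rw [show (4:ℝ)-((4:ℕ):ℝ) = 0 by norm_num, Real.rpow_zero]
        rw [he] at this
        calc _ ≤ (1:ℝ)/((4:ℕ):ℝ) := this
          _ = 1/4 := by norm_num
      have h2 := piece2_4 hc hl hlR
      calc _ ≤ 1/4 + c⁻¹*c⁻¹*(Real.log (δ+1) + Real.log (1/lam)) := add_le_add h1 h2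
        _ = a + b * L := by rw [ha, hb, hL]; ring
    refine (main_bound (by omega) hc δ hδ hl hl1 hξ).trans ?_
    have hlam2 : lam^(((4:ℕ):ℝ)-2) = lam^(2:ℕ) := by
      rw [show ((4:ℕ):ℝ)-2 = ((2:ℕ):ℝ) by norm_num, Real.rpow_natCast]
    have habL : a + b*L ≤ (a/Real.log 2 + b)*L := by
      have h1 : a * 1 ≤ a * (L/Real.log 2) :=
        mul_le_mul_of_nonneg_left ((one_le_div hlog2).mpr hLlog2) ha0
      have h2 : a * (L/Real.log 2) = (a/Real.log 2)*L := by ring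
      nlinarith
    calc A * (K * lam^(((4:ℕ):ℝ)-2) *
          ∫ r in (0:ℝ)..(δ+1), r^(4-1:ℕ) * (lam^2 + c*r^2)^((2:ℝ)-((4:ℕ):ℝ)))
        ≤ A * (K * lam^(((4:ℕ):ℝ)-2) * (a + b*L)) := by
          apply mul_le_mul_of_nonneg_left _ hA0
          apply mul_le_mul_of_nonneg_left hI (mul_nonneg hK0 (rpow_nonneg hl.le _))
      _ ≤ A * (K * lam^(((4:ℕ):ℝ)-2) * ((a/Real.log 2 + b)*L)) := by
          apply mul_le_mul_of_nonneg_left _ hA0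
          apply mul_le_mul_of_nonneg_left habL (mul_nonneg hK0 (rpow_nonneg hl.le _))
      _ = (A*K*(a/Real.log 2 + b)) * lam^(((4:ℕ):ℝ)-2) * L := by ring
      _ = (A*K*(a/Real.log 2 + b)) * lam^2 * L := by rw [hlam2]
      _ ≤ (A*K*(a/Real.log 2 + b) + 1) * lam^2 * L := by nlinarith [sq_nonneg lam, hL0]
end

section
/- Let n ≥ 3 be an integer and r = 2(n−1)/n. There exists a constant C > 0 depending only on n such that for every μ ∈ (0, 1], ‖U₁^{r−1}‖_{L^r(∂′B_{1/μ}⁺)} = (∫_{{y′ ∈ ℝ^{n−1} : |y′| < 1/μ}} U₁(y′, 0)^{(r−1) r} dy′)^{1/r} ≤ C (1 + μ^{(n²−8n+8)/(2n)}). -/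
open MeasureTheory Real

lemma disc_ne {n : ℕ} : ((n:ℝ)^2 - 8*n + 8) ≠ 0 := by
  intro h
  have hz : ((n:ℤ))^2 - 8*(n:ℤ) + 8 = 0 := by exact_mod_cast h
  set m : ℤ := (n:ℤ) - 4 with hm
  have hsq : m^2 = 8 := by rw [hm]; ring_nf; omega
  have h1 : m ≤ 2 := by nlinarith
  have h2 : -2 ≤ m := by nlinarith
  interval_cases m <;> omega

lemma mul_self_rpow {x s : ℝ} (hx0 : 0 < x) : x * x ^ (s - 1) = x ^ s := by
  have := (Real.rpow_add hx0 1 (s-1)).symm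
  simpa using this

lemma add_rpow_le {x y s : ℝ} (hx : 0 ≤ x) (hy : 0 ≤ y) (hs : 0 < s) (hs1 : s ≤ 1) :
    (x + y) ^ s ≤ x ^ s + y ^ s := by
  rcases eq_or_lt_of_le hx with hx0 | hx0
  · simp [← hx0, Real.zero_rpow hs.ne']
  rcases eq_or_lt_of_le hy with hy0 | hy0
  · simp [← hy0, Real.zero_rpow hs.ne']
  have hxy : 0 < x + y := by linarith
  have h1 : x * (x + y) ^ (s - 1) ≤ x ^ s := by
    have h : (x + y) ^ (s - 1) ≤ x ^ (s - 1) :=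
      Real.rpow_le_rpow_of_nonpos hx0 (by linarith) (by linarith)
    calc x * (x + y) ^ (s - 1) ≤ x * x ^ (s - 1) := mul_le_mul_of_nonneg_left h hx
      _ = x ^ s := mul_self_rpow hx0
  have h2 : y * (x + y) ^ (s - 1) ≤ y ^ s := by
    have h : (x + y) ^ (s - 1) ≤ y ^ (s - 1) :=
      Real.rpow_le_rpow_of_nonpos hy0 (by linarith) (by linarith)
    calc y * (x + y) ^ (s - 1) ≤ y * y ^ (s - 1) := mul_le_mul_of_nonneg_left h hy
      _ = y ^ s := mul_self_rpow hy0
  calc (x + y) ^ s = (x + y) * (x + y) ^ (s - 1) := (mul_self_rpow hxy).symm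
    _ = x * (x + y) ^ (s - 1) + y * (x + y) ^ (s - 1) := by ring
    _ ≤ x ^ s + y ^ s := add_le_add h1 h2

lemma oneDim {a R : ℝ} (ha : a ≠ 0) (hR : 0 ≤ R) :
    ∫ y in Set.Ioo (0:ℝ) R, (1+y)^(a-1) ≤ (1 + (1+R)^a)/|a| := by
  have h1 : ∫ y in Set.Ioo (0:ℝ) R, (1+y)^(a-1) = ∫ y in (0:ℝ)..R, (1+y)^(a-1) := by
    rw [intervalIntegral.integral_of_le hR, MeasureTheory.integral_Ioc_eq_integral_Ioo]
  have h2 : ∫ y in (0:ℝ)..R, (1+y)^(a-1) = ∫ x in (1:ℝ)..(1+R), x^(a-1) := by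
    simpa using intervalIntegral.integral_comp_add_left (a := (0:ℝ)) (b := R)
      (fun x => x ^ (a-1)) 1
  have h3 : ∫ x in (1:ℝ)..(1+R), x^(a-1) = ((1+R)^a - 1)/a := by
    rw [integral_rpow (Or.inr ⟨by intro h; apply ha; linarith, by
      simp only [Set.mem_uIcc]; push_neg; constructor <;> intro h <;> linarith⟩)]
    have : a - 1 + 1 = a := by ring
    rw [this, Real.one_rpow]
  rw [h1, h2, h3]
  have h4 : (0:ℝ) ≤ (1+R)^a := Real.rpow_nonneg (by linarith) a
  calc ((1+R)^a - 1)/a ≤ |((1+R)^a - 1)/a| := le_abs_self _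
    _ = |(1+R)^a - 1|/|a| := abs_div _ _
    _ ≤ (1 + (1+R)^a)/|a| := by
        have hb : |(1+R)^a - 1| ≤ 1 + (1+R)^a := by
          rw [abs_sub_comm]
          calc |1 - (1+R)^a| ≤ |1| + |(1+R)^a| := abs_sub _ _
            _ = 1 + (1+R)^a := by rw [abs_one, abs_of_nonneg h4]
        exact (div_le_div_iff_of_pos_right (abs_pos.mpr ha)).mpr hb

lemma ptbound {c q t : ℝ} (hc : 0 < c) (hq : 0 ≤ q) (ht : 0 ≤ t) :
    (1 + c*t^2)^(-q) ≤ (min 1 c / 2)^(-q) * (1+t)^(-(2*q)) := by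
  set m := min 1 c with hm
  have hm0 : 0 < m := lt_min one_pos hc
  have hm1 : m ≤ 1 := min_le_left _ _
  have hmc : m ≤ c := min_le_right _ _
  have key : m/2 * (1+t)^2 ≤ 1 + c*t^2 := by nlinarith [sq_nonneg (1-t), sq_nonneg t]
  have hpos : 0 < m/2 * (1+t)^2 := by positivity
  have h1 : (1 + c*t^2)^(-q) ≤ (m/2 * (1+t)^2)^(-q) :=
    Real.rpow_le_rpow_of_nonpos hpos key (by linarith)
  have h2 : (m/2 * (1+t)^2)^(-q) = (m/2)^(-q) * (1+t)^(-(2*q)) := by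
    rw [Real.mul_rpow (by positivity) (by positivity)]
    congr 1
    rw [← Real.rpow_natCast (1+t) 2, ← Real.rpow_mul (by linarith)]
    norm_num
  rw [h2] at h1; exact h1

lemma radial {d : ℕ} (hd : 1 ≤ d) {R b : ℝ} :
    ∫ y in Metric.ball (0 : EuclideanSpace ℝ (Fin d)) R, (1+‖y‖)^b
      = (d : ℝ) * (volume (Metric.ball (0 : EuclideanSpace ℝ (Fin d)) 1)).toReal *
        ∫ t in Set.Ioo (0:ℝ) R, t^(d-1) * (1+t)^b := by
  set E := EuclideanSpace ℝ (Fin d)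
  haveI : Nontrivial E := by
    apply Module.nontrivial_of_finrank_pos (R := ℝ) (M := E)
    rw [finrank_euclideanSpace_fin]; omega
  set g : ℝ → ℝ := fun t => if t < R then (1+t)^b else 0 with hg
  have h1 : ∫ y in Metric.ball (0 : E) R, (1+‖y‖)^b = ∫ y : E, g ‖y‖ := by
    rw [← MeasureTheory.integral_indicator measurableSet_ball]
    congr 1
    funext y
    by_cases hy : y ∈ Metric.ball (0 : E) R
    · rw [Set.indicator_of_mem hy]
      simp only [hg]
      rw [if_pos (by simpa [mem_ball_zero_iff] using hy)]
    · rw [Set.indicator_of_notMem hy]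
      simp only [hg]
      rw [if_neg (by simpa [mem_ball_zero_iff] using hy)]
  have h2 := MeasureTheory.integral_fun_norm_addHaar (volume : Measure E) g
  rw [finrank_euclideanSpace_fin] at h2
  have h3 : ∫ t in Set.Ioi (0:ℝ), t^(d-1) • g t
      = ∫ t in Set.Ioo (0:ℝ) R, t^(d-1) * (1+t)^b := by
    rw [← Set.Ioi_inter_Iio, ← MeasureTheory.setIntegral_indicator measurableSet_Iio]
    congr 1
    funext t
    by_cases ht : t < R
    · rw [Set.indicator_of_mem (Set.mem_Iio.mpr ht), smul_eq_mul, hg]; simp [ht]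
    · rw [Set.indicator_of_notMem (by simpa using ht), hg]; simp [ht]
  rw [h1, h2, h3, nsmul_eq_mul, smul_eq_mul, mul_assoc]; rfl

lemma final_est {p μ : ℝ} (hμ : 0 < μ) (hμ1 : μ ≤ 1) :
    1 + (1+1/μ)^(-p) ≤ (1+2^|p|) * (1+μ^p) := by
  have hμp : 0 ≤ μ^p := Real.rpow_nonneg hμ.le _
  have h2p : 1 ≤ (2:ℝ)^|p| := Real.one_le_rpow one_le_two (abs_nonneg p)
  have hR1 : 1 ≤ 1/μ := one_le_one_div hμ hμ1
  rcases le_or_gt p 0 with hp | hp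
  · have h1R : 1+1/μ ≤ 2/μ := by
      have h2 : 2/μ = 1/μ + 1/μ := by ring
      linarith
    have hmono : (1+1/μ)^(-p) ≤ (2/μ)^(-p) :=
      Real.rpow_le_rpow (by linarith) h1R (by linarith)
    have heq : (2/μ)^(-p) = 2^|p| * μ^p := by
      rw [div_eq_mul_inv, Real.mul_rpow (by norm_num) (by positivity),
        Real.inv_rpow hμ.le, ← Real.rpow_neg hμ.le, neg_neg, abs_of_nonpos hp]
    rw [heq] at hmono
    nlinarith [hmono, h2p, hμp]
  · have h1 : (1+1/μ)^(-p) ≤ 1 :=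
      Real.rpow_le_one_of_one_le_of_nonpos (by linarith) (by linarith)
    nlinarith [h1, h2p, hμp]

/-- with `r = 2(n−1)/n`, the `L^r`-norm over the boundary disc
`∂′B_{1/μ}⁺ = {y′ ∈ ℝ^{n−1} : |y′| < 1/μ}` of `U₁(·,0)^{r−1}`, where
`U₁(y′,0) = (1 + c(n)|y′|²)^{−(n−2)/2}`, is bounded by
`C(1 + μ^{(n²−8n+8)/(2n)})` for `μ ∈ (0,1]`. -/
theorem boundary_norm_bound (n : ℕ) (hn : 3 ≤ n) :
    ∃ C > (0 : ℝ), ∀ μ : ℝ, 0 < μ → μ ≤ 1 →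
      (∫ y in Metric.ball (0 : EuclideanSpace ℝ (Fin (n - 1))) (1 / μ),
          ((1 + bubbleC n * ‖y‖ ^ 2) ^ (-((n : ℝ) - 2) / 2)) ^
            ((2 * ((n : ℝ) - 1) / n - 1) * (2 * ((n : ℝ) - 1) / n))) ^
        ((n : ℝ) / (2 * ((n : ℝ) - 1))) ≤
      C * (1 + μ ^ (((n : ℝ) ^ 2 - 8 * n + 8) / (2 * n))) := by
  have hn3 : (3:ℝ) ≤ (n:ℝ) := by exact_mod_cast hn
  have hn0 : (0:ℝ) < n := by linarith
  have hc : 0 < bubbleC n := bubbleC_pos hn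
  set c : ℝ := bubbleC n with hcdef
  set E := EuclideanSpace ℝ (Fin (n-1)) with hE
  set q : ℝ := ((n:ℝ)-2)^2*((n:ℝ)-1)/(n:ℝ)^2 with hqdef
  have hq0 : 0 < q := by
    apply div_pos (mul_pos (by nlinarith) (by linarith)) (by positivity)
  set d : ℕ := n - 1 with hddef
  have hd : 1 ≤ d := by omega
  have hdcast : ((d:ℕ):ℝ) = (n:ℝ) - 1 := by
    rw [hddef]; push_cast [Nat.cast_sub (by omega : 1 ≤ n)]; ring
  have hd1cast : ((d-1:ℕ):ℝ) = (n:ℝ) - 2 := by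
    rw [hddef]
    have : n - 1 - 1 = n - 2 := by omega
    rw [this]; push_cast [Nat.cast_sub (by omega : 2 ≤ n)]; ring
  set s : ℝ := (n:ℝ)/(2*((n:ℝ)-1)) with hsdef
  have hs0 : 0 < s := by apply div_pos hn0 (by linarith)
  have hs1 : s ≤ 1 := by
    rw [hsdef, div_le_one (by linarith)]; linarith
  set a : ℝ := ((n:ℝ)-1) - 2*q with hadef
  set p : ℝ := ((n:ℝ)^2-8*(n:ℝ)+8)/(2*(n:ℝ)) with hpdef
  have hn1 : (n:ℝ) - 1 ≠ 0 := by intro h; linarith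
  have hnne : (n:ℝ) ≠ 0 := hn0.ne'
  have ha : a ≠ 0 := by
    intro h
    apply disc_ne (n := n)
    rw [hadef, hqdef] at h
    field_simp at h
    nlinarith [h]
  have has : a * s = -p := by
    rw [hadef, hqdef, hsdef, hpdef]
    field_simp
    ring
  set K1 : ℝ := (min 1 c / 2)^(-q) with hK1def
  have hK1 : 0 < K1 := Real.rpow_pos_of_pos (by positivity) _
  set V : ℝ := (volume (Metric.ball (0:E) 1)).toReal with hVdef
  have hV : 0 < V := by
    rw [hVdef]
    exact ENNReal.toReal_pos (Metric.measure_ball_pos volume _ one_pos).ne'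
      (measure_ball_lt_top).ne
  set K2 : ℝ := K1 * ((d:ℝ) * V) / |a| with hK2def
  have hK2 : 0 < K2 := by
    apply div_pos (mul_pos hK1 (mul_pos (by exact_mod_cast hd) hV)) (abs_pos.mpr ha)
  refine ⟨K2^s * (1 + 2^|p|), by positivity, ?_⟩
  intro μ hμ hμ1
  set R : ℝ := 1/μ with hRdef
  have hR1 : 1 ≤ R := by rw [hRdef]; exact one_le_one_div hμ hμ1
  have hR0 : 0 < R := by linarith
  -- rewrite the integrand
  have hpt : ∀ y : E, ((1 + c * ‖y‖ ^ 2) ^ (-((n : ℝ) - 2) / 2)) ^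
      ((2 * ((n : ℝ) - 1) / n - 1) * (2 * ((n : ℝ) - 1) / n)) = (1 + c*‖y‖^2)^(-q) := by
    intro y
    rw [← Real.rpow_mul (by positivity)]
    congr 1
    rw [hqdef]
    field_simp
    ring
  simp only [hpt]
  -- integrability facts on the ball
  have contbase : Continuous fun y : E => 1 + c*‖y‖^2 :=
    continuous_const.add (continuous_const.mul (continuous_norm.pow 2))
  have contbase2 : Continuous fun y : E => 1 + ‖y‖ := continuous_const.add continuous_norm
  have cont1 : Continuous fun y : E => (1 + c*‖y‖^2)^(-q) := by
    apply Continuous.rpow_const contbase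
    intro y; left; positivity
  have cont2 : Continuous fun y : E => K1 * (1+‖y‖)^(-(2*q)) := by
    apply Continuous.mul continuous_const
    apply Continuous.rpow_const contbase2
    intro y; left; positivity
  have int1 : IntegrableOn (fun y : E => (1 + c*‖y‖^2)^(-q)) (Metric.ball 0 R) volume :=
    ((cont1.continuousOn).integrableOn_compact' (isCompact_closedBall 0 R)
      measurableSet_closedBall).mono_set Metric.ball_subset_closedBall
  have int2 : IntegrableOn (fun y : E => K1 * (1+‖y‖)^(-(2*q))) (Metric.ball 0 R) volume :=
    ((cont2.continuousOn).integrableOn_compact' (isCompact_closedBall 0 R)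
      measurableSet_closedBall).mono_set Metric.ball_subset_closedBall
  -- integrability facts on Ioo
  have cont3 : ContinuousOn (fun t : ℝ => t^(d-1) * (1+t)^(-(2*q))) (Set.Icc 0 R) := by
    apply ContinuousOn.mul (continuousOn_id.pow _)
    apply ContinuousOn.rpow_const (by fun_prop)
    intro t ht; left; have := ht.1; intro h; simp at ht; linarith
  have cont4 : ContinuousOn (fun t : ℝ => (1+t)^(a-1)) (Set.Icc 0 R) := by
    apply ContinuousOn.rpow_const (by fun_prop)
    intro t ht; left; have := ht.1; intro h; simp at ht; linarith
  have int3 : IntegrableOn (fun t : ℝ => t^(d-1) * (1+t)^(-(2*q))) (Set.Ioo 0 R) volume :=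
    (cont3.integrableOn_compact' isCompact_Icc measurableSet_Icc).mono_set
      Set.Ioo_subset_Icc_self
  have int4 : IntegrableOn (fun t : ℝ => (1+t)^(a-1)) (Set.Ioo 0 R) volume :=
    (cont4.integrableOn_compact' isCompact_Icc measurableSet_Icc).mono_set
      Set.Ioo_subset_Icc_self
  -- main integral bound
  have hIle : ∫ y in Metric.ball (0:E) R, (1 + c*‖y‖^2)^(-q) ≤ K2 * (1+(1+R)^a) := by
    have step1 : ∫ y in Metric.ball (0:E) R, (1 + c*‖y‖^2)^(-q)
        ≤ ∫ y in Metric.ball (0:E) R, K1 * (1+‖y‖)^(-(2*q)) := by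
      apply setIntegral_mono_on int1 int2 measurableSet_ball
      intro y _
      exact ptbound hc hq0.le (norm_nonneg y)
    have step2 : ∫ y in Metric.ball (0:E) R, K1 * (1+‖y‖)^(-(2*q))
        = K1 * ((d:ℝ) * V * ∫ t in Set.Ioo (0:ℝ) R, t^(d-1) * (1+t)^(-(2*q))) := by
      rw [MeasureTheory.integral_const_mul]
      congr 1
      exact radial hd
    have step3 : ∫ t in Set.Ioo (0:ℝ) R, t^(d-1) * (1+t)^(-(2*q))
        ≤ ∫ t in Set.Ioo (0:ℝ) R, (1+t)^(a-1) := by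
      apply setIntegral_mono_on int3 int4 measurableSet_Ioo
      intro t ht
      have ht0 : (0:ℝ) ≤ t := ht.1.le
      calc t^(d-1) * (1+t)^(-(2*q)) ≤ (1+t)^(d-1) * (1+t)^(-(2*q)) := by
            apply mul_le_mul_of_nonneg_right (pow_le_pow_left₀ ht0 (by linarith) _)
            exact Real.rpow_nonneg (by linarith) _
        _ = (1+t)^(a-1) := by
            rw [← Real.rpow_natCast (1+t) (d-1), ← Real.rpow_add (by linarith),
              hd1cast, hadef]
            congr 1
            ring
    have step4 : ∫ t in Set.Ioo (0:ℝ) R, (1+t)^(a-1) ≤ (1 + (1+R)^a)/|a| :=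
      oneDim ha hR0.le
    calc ∫ y in Metric.ball (0:E) R, (1 + c*‖y‖^2)^(-q)
        ≤ K1 * ((d:ℝ) * V * ∫ t in Set.Ioo (0:ℝ) R, t^(d-1) * (1+t)^(-(2*q))) := by
          rw [← step2]; exact step1
      _ ≤ K1 * ((d:ℝ) * V * ((1 + (1+R)^a)/|a|)) := by
          apply mul_le_mul_of_nonneg_left _ hK1.le
          apply mul_le_mul_of_nonneg_left (step3.trans step4)
          positivity
      _ = K2 * (1+(1+R)^a) := by rw [hK2def]; field_simp
  -- final estimates
  have hμp : 0 ≤ μ^p := Real.rpow_nonneg hμ.le _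
  have h2p : 1 ≤ (2:ℝ)^|p| := Real.one_le_rpow one_le_two (abs_nonneg p)
  have hRa : (0:ℝ) ≤ (1+R)^a := Real.rpow_nonneg (by linarith) _
  have hfinal : 1 + (1+R)^(-p) ≤ (1+2^|p|) * (1+μ^p) := by
    rw [hRdef]; exact final_est hμ hμ1
  have hInonneg : 0 ≤ ∫ y in Metric.ball (0:E) R, (1 + c*‖y‖^2)^(-q) :=
    setIntegral_nonneg measurableSet_ball fun y _ => Real.rpow_nonneg (by positivity) _
  calc (∫ y in Metric.ball (0:E) R, (1 + c*‖y‖^2)^(-q))^s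
      ≤ (K2 * (1+(1+R)^a))^s := Real.rpow_le_rpow hInonneg hIle hs0.le
    _ = K2^s * (1+(1+R)^a)^s := Real.mul_rpow hK2.le (by linarith)
    _ ≤ K2^s * (1 + (1+R)^(a*s)) := by
        have hadd : (1+(1+R)^a)^s ≤ 1 + (1+R)^(a*s) := by
          have h := add_rpow_le (x := 1) (y := (1+R)^a) zero_le_one hRa hs0 hs1
          rwa [Real.one_rpow, ← Real.rpow_mul (by linarith : (0:ℝ) ≤ 1+R)] at h
        exact mul_le_mul_of_nonneg_left hadd (Real.rpow_nonneg hK2.le _)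
    _ = K2^s * (1 + (1+R)^(-p)) := by rw [has]
    _ ≤ K2^s * ((1+2^|p|) * (1+μ^p)) :=
        mul_le_mul_of_nonneg_left hfinal (Real.rpow_nonneg hK2.le _)
    _ = K2^s * (1 + 2^|p|) * (1 + μ^p) := by ring
end

section
/- Let n ≥ 3 be an integer and r₁ = 2n/(n+2). There exists a constant C > 0 depending only on n such that for every μ ∈ (0, 1], ‖U₁^{r₁−1}‖_{L^{r₁}(B_{1/μ}⁺)} = (∫_{B_{1/μ}⁺} U₁(x)^{(r₁−1) r₁} dx)^{1/r₁} ≤ C (1 + μ^{(n²−12n+4)/(2(n+2))}). -/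
open MeasureTheory Real

lemma aux_rpow_integral {β : ℝ} (hβ : β ≠ 0) {R : ℝ} (hR : 1 ≤ R) :
    ∫ y in (1:ℝ)..R, y ^ (β - 1) ≤ (1 + R ^ β) / |β| := by
  have h0R : (0:ℝ) < R := lt_of_lt_of_le one_pos hR
  rw [integral_rpow (Or.inr ⟨fun h => hβ (by linarith), by
        rw [Set.uIcc_of_le hR]; rintro ⟨h0, -⟩; linarith⟩)]
  have hb : β - 1 + 1 = β := by ring
  rw [hb, Real.one_rpow]
  have hRb : 0 < R ^ β := Real.rpow_pos_of_pos h0R β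
  rcases hβ.lt_or_gt with h | h
  · rw [abs_of_neg h]
    have hβ' : (0:ℝ) < -β := by linarith
    have heq : (R ^ β - 1) / β = (1 - R ^ β) / (-β) := by
      field_simp
      ring
    rw [heq]
    gcongr
    linarith
  · rw [abs_of_pos h]
    gcongr
    linarith

lemma aux_add_rpow {t s : ℝ} (ht : 0 ≤ t) (hs0 : 0 ≤ s) (hs1 : s ≤ 1) :
    (1 + t) ^ s ≤ 1 + t ^ s := by
  have h := NNReal.rpow_add_le_add_rpow (1 : NNReal) t.toNNReal hs0 hs1
  have h1 : ((1 + t.toNNReal : NNReal) : ℝ) = 1 + t := by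
    simp [Real.coe_toNNReal t ht]
  calc (1 + t) ^ s = (((1 + t.toNNReal : NNReal) : ℝ)) ^ s := by rw [h1]
    _ = (((1 + t.toNNReal) ^ s : NNReal) : ℝ) := by rw [← NNReal.coe_rpow]
    _ ≤ (((1:NNReal) ^ s + t.toNNReal ^ s : NNReal) : ℝ) := by exact_mod_cast h
    _ = 1 + t ^ s := by
        push_cast [NNReal.one_rpow]
        rw [Real.coe_toNNReal t ht]

set_option maxHeartbeats 1000000 in
/-- with `r₁ = 2n/(n+2)`, the `L^{r₁}`-norm of `U₁^{r₁−1}` over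
the half-ball `B_{1/μ}⁺` is bounded by `C(1 + μ^{(n²−12n+4)/(2(n+2))})` for
`μ ∈ (0,1]`. -/
theorem interior_norm_bound (n : ℕ) (hn : 3 ≤ n) :
    ∃ C > (0 : ℝ), ∀ μ : ℝ, 0 < μ → μ ≤ 1 →
      (∫ x in Metric.ball 0 (1 / μ) ∩ upperHalf n,
          bubble n 0 1 x ^
            ((2 * (n : ℝ) / ((n : ℝ) + 2) - 1) * (2 * (n : ℝ) / ((n : ℝ) + 2)))) ^
        (((n : ℝ) + 2) / (2 * n)) ≤
      C * (1 + μ ^ (((n : ℝ) ^ 2 - 12 * n + 4) / (2 * ((n : ℝ) + 2)))) := by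
  classical
  have hN3 : (3:ℝ) ≤ (n:ℝ) := by exact_mod_cast hn
  have hN0 : (0:ℝ) < (n:ℝ) := by linarith
  have hN2 : (0:ℝ) < (n:ℝ) + 2 := by linarith
  have hNne : (n:ℝ) ≠ 0 := ne_of_gt hN0
  have hN2ne : (n:ℝ) + 2 ≠ 0 := ne_of_gt hN2
  haveI : NeZero n := ⟨by omega⟩
  -- the quadratic n² - 12n + 4 is never zero for natural n
  have hquad : ((n:ℝ)^2 - 12 * (n:ℝ) + 4) ≠ 0 := by
    rcases le_or_gt n 11 with h | h
    · interval_cases n <;> norm_num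
    · have h12 : (12:ℝ) ≤ (n:ℝ) := by exact_mod_cast h
      nlinarith
  -- positivity of bubbleC
  have hc : 0 < bubbleC n := by
    have hπ : 0 < π := Real.pi_pos
    have hΓ1 : 0 < Real.Gamma (n:ℝ) := Real.Gamma_pos_of_pos hN0
    have hΓ2 : 0 < Real.Gamma ((n:ℝ)/2) := Real.Gamma_pos_of_pos (by positivity)
    have hS : 0 < sobolevS n := by
      rw [sobolevS]
      have h1 : 0 < (π * n * ((n:ℝ) - 2)) := by
        apply mul_pos (mul_pos hπ hN0); linarith
      have h2 : 0 < (Real.Gamma n / Real.Gamma ((n : ℝ) / 2)) ^ ((2 : ℝ) / n) :=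
        Real.rpow_pos_of_pos (div_pos hΓ1 hΓ2) _
      positivity
    rw [bubbleC]
    have h2 : (0:ℝ) < 2 ^ ((2 : ℝ) / n) := Real.rpow_pos_of_pos two_pos _
    have h3 : (0:ℝ) < (n:ℝ) - 2 := by linarith
    positivity
  set q : ℝ := (2 * (n : ℝ) / ((n : ℝ) + 2) - 1) * (2 * (n : ℝ) / ((n : ℝ) + 2)) with hqd
  set e : ℝ := ((n:ℝ) - 2) / 2 * q with hed
  set β : ℝ := (n:ℝ) - 2 * e with hβd
  set s : ℝ := ((n : ℝ) + 2) / (2 * n) with hsd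
  set α : ℝ := (((n : ℝ) ^ 2 - 12 * n + 4) / (2 * ((n : ℝ) + 2))) with hαd
  have hq0 : 0 ≤ q := by
    have h1 : (1:ℝ) ≤ 2 * (n:ℝ) / ((n:ℝ) + 2) := by
      rw [le_div_iff₀ hN2]; linarith
    rw [hqd]
    nlinarith
  have he0 : 0 ≤ e := by
    rw [hed]
    apply mul_nonneg _ hq0
    linarith
  have hβeq : β = (n:ℝ) * (12 * (n:ℝ) - (n:ℝ)^2 - 4) / ((n:ℝ) + 2)^2 := by
    rw [hβd, hed, hqd]
    field_simp
    ring
  have hβne : β ≠ 0 := by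
    intro h0
    apply hquad
    rw [hβeq, div_eq_zero_iff] at h0
    rcases h0 with h0 | h0
    · rcases mul_eq_zero.mp h0 with h1 | h1
      · exact absurd h1 hNne
      · linarith
    · exact absurd h0 (by positivity)
  have habs : 0 < |β| := abs_pos.mpr hβne
  have hs0 : 0 < s := by rw [hsd]; positivity
  have hs1 : s ≤ 1 := by
    rw [hsd, div_le_one (by linarith)]
    linarith
  have hexp : -(β * s) = α := by
    rw [hβd, hed, hqd, hsd, hαd]
    field_simp
    ring
  -- rewrite the integrand
  set g : EuclideanSpace ℝ (Fin n) → ℝ := fun x => (1 + bubbleC n * ‖x‖ ^ 2) ^ (-e) with hgd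
  have hgeq : ∀ x : EuclideanSpace ℝ (Fin n), bubble n 0 1 x ^ q = g x := by
    intro x
    have hb : (0:ℝ) < 1 + bubbleC n * ‖x‖ ^ 2 := by positivity
    rw [hgd]
    simp only [bubble, sub_zero, one_pow, one_div]
    rw [Real.inv_rpow hb.le, ← Real.rpow_neg hb.le, ← Real.rpow_mul hb.le]
    congr 1
    rw [hed]
    ring
  have hbase : Continuous fun x : EuclideanSpace ℝ (Fin n) => 1 + bubbleC n * ‖x‖ ^ 2 :=
    continuous_const.add (continuous_const.mul (continuous_norm.pow 2))
  have hgc : Continuous g := by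
    rw [hgd]
    exact hbase.rpow_const fun x => Or.inl (by positivity)
  have hg0 : ∀ x : EuclideanSpace ℝ (Fin n), 0 ≤ g x := by
    intro x
    rw [hgd]
    positivity
  -- the radial majorant
  set H : ℝ → ℝ := fun y => y ^ (n - 1) * (1 + bubbleC n * y ^ 2) ^ (-e) with hHd
  have hHbase : Continuous fun y : ℝ => 1 + bubbleC n * y ^ 2 :=
    continuous_const.add (continuous_const.mul (continuous_pow 2))
  have hHc : Continuous H := by
    rw [hHd]
    exact (continuous_pow (n-1)).mul
      (hHbase.rpow_const fun y => Or.inl (by positivity))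
  -- measurability of the half space
  have hxlast : xlast n = fun x : EuclideanSpace ℝ (Fin n) => x ⟨n - 1, by omega⟩ := by
    funext x
    rw [xlast, dif_neg (by omega : ¬ n = 0)]
  have hmU : MeasurableSet (upperHalf n) := by
    have hmx : Measurable (xlast n) := by
      rw [hxlast]
      exact (EuclideanSpace.proj (⟨n - 1, by omega⟩ : Fin n)).continuous.measurable
    exact measurableSet_lt measurable_const hmx
  -- the constant
  set V : ℝ := (n:ℝ) * (volume (Metric.ball (0:EuclideanSpace ℝ (Fin n)) 1)).toReal with hVd
  have hV0 : 0 ≤ V := by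
    rw [hVd]; positivity
  set K : ℝ := V * (1 + (bubbleC n) ^ (-e) / |β|) + 1 with hKd
  have hK1 : 1 ≤ K := by
    rw [hKd]
    have : 0 ≤ (bubbleC n) ^ (-e) / |β| := div_nonneg (Real.rpow_nonneg hc.le _) habs.le
    nlinarith
  have hK0 : 0 < K := by linarith
  refine ⟨K ^ s, Real.rpow_pos_of_pos hK0 s, ?_⟩
  intro μ hμ0 hμ1
  set R : ℝ := 1 / μ with hRd
  have hR1 : 1 ≤ R := by
    rw [hRd, le_div_iff₀ hμ0, one_mul]
    exact hμ1
  have hR0 : 0 < R := lt_of_lt_of_le one_pos hR1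
  have hRb0 : 0 < R ^ β := Real.rpow_pos_of_pos hR0 β
  -- the radial profile with cutoff
  set f1 : ℝ → ℝ := fun r => if r < R then (1 + bubbleC n * r ^ 2) ^ (-e) else 0 with hf1d
  -- step 1 : pass to the full ball
  have hgint : IntegrableOn g (Metric.ball (0:EuclideanSpace ℝ (Fin n)) R) volume :=
    (hgc.continuousOn.integrableOn_compact (isCompact_closedBall 0 R)).mono_set
      Metric.ball_subset_closedBall
  have h1 : ∫ x in Metric.ball (0:EuclideanSpace ℝ (Fin n)) R ∩ upperHalf n, g x ≤ ∫ x in Metric.ball (0:EuclideanSpace ℝ (Fin n)) R, g x :=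
    setIntegral_mono_set hgint (ae_of_all _ hg0)
      (HasSubset.Subset.eventuallyLE Set.inter_subset_left)
  -- step 2 : polar coordinates
  have hxf : ∀ x : EuclideanSpace ℝ (Fin n), f1 ‖x‖ = Set.indicator (Metric.ball (0:EuclideanSpace ℝ (Fin n)) R) g x := by
    intro x
    by_cases hx : ‖x‖ < R
    · rw [hf1d]
      simp only [if_pos hx]
      rw [Set.indicator_of_mem (mem_ball_zero_iff.mpr hx), hgd]
    · rw [hf1d]
      simp only [if_neg hx]
      rw [Set.indicator_of_notMem (fun hmem => hx (mem_ball_zero_iff.mp hmem))]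
  have h2 : ∫ x in Metric.ball (0:EuclideanSpace ℝ (Fin n)) R, g x = ∫ x : EuclideanSpace ℝ (Fin n), f1 ‖x‖ := by
    rw [← integral_indicator measurableSet_ball]
    exact integral_congr_ae (Filter.Eventually.of_forall fun x => (hxf x).symm)
  have hdim : Module.finrank ℝ (EuclideanSpace ℝ (Fin n)) = n := finrank_euclideanSpace_fin
  have h4 : ∫ y in Set.Ioi (0:ℝ), y ^ (n - 1) • f1 y = ∫ y in Set.Ioo (0:ℝ) R, H y := by
    have hind : ∀ y : ℝ, y ^ (n - 1) • f1 y = Set.indicator (Set.Iio R) H y := by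
      intro y
      by_cases hy : y < R <;>
        simp [hf1d, hHd, Set.indicator_apply, Set.mem_Iio, hy, smul_eq_mul]
    calc ∫ y in Set.Ioi (0:ℝ), y ^ (n - 1) • f1 y
        = ∫ y in Set.Ioi (0:ℝ), Set.indicator (Set.Iio R) H y := by simp only [hind]
      _ = ∫ y in Set.Ioi (0:ℝ) ∩ Set.Iio R, H y := setIntegral_indicator measurableSet_Iio
      _ = ∫ y in Set.Ioo (0:ℝ) R, H y := by rw [Set.Ioi_inter_Iio]
  have h23 : ∫ x in Metric.ball (0:EuclideanSpace ℝ (Fin n)) R, g x = V * ∫ y in Set.Ioo (0:ℝ) R, H y := by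
    rw [h2, integral_fun_norm_addHaar (volume : Measure (EuclideanSpace ℝ (Fin n))) f1, hdim, h4, hVd]
    rw [nsmul_eq_mul, smul_eq_mul]
    rw [measureReal_def]; ring
  -- step 3 : bound the 1d integral
  have hHnonneg : ∀ y ∈ Set.Ioo (0:ℝ) 1 ∪ Set.Ico (1:ℝ) R, 0 ≤ H y := by
    intro y hy
    have hy0 : 0 ≤ y := by
      rcases hy with hy | hy
      · exact hy.1.le
      · linarith [hy.1]
    rw [hHd]
    positivity
  have hHint : IntegrableOn H (Set.Ioo (0:ℝ) 1 ∪ Set.Ico (1:ℝ) R) volume := by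
    apply (hHc.continuousOn.integrableOn_compact (isCompact_Icc (a := (0:ℝ)) (b := R))).mono_set
    apply Set.union_subset
    · exact fun y hy => ⟨hy.1.le, hy.2.le.trans hR1⟩
    · exact fun y hy => ⟨by linarith [hy.1], hy.2.le⟩
  have h5 : ∫ y in Set.Ioo (0:ℝ) R, H y ≤
      (∫ y in Set.Ioo (0:ℝ) 1, H y) + ∫ y in Set.Ico (1:ℝ) R, H y := by
    have hsub : Set.Ioo (0:ℝ) R ⊆ Set.Ioo (0:ℝ) 1 ∪ Set.Ico (1:ℝ) R := by
      intro y hy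
      rcases lt_or_ge y 1 with h | h
      · exact Or.inl ⟨hy.1, h⟩
      · exact Or.inr ⟨h, hy.2⟩
    have hdisj : Disjoint (Set.Ioo (0:ℝ) 1) (Set.Ico (1:ℝ) R) :=
      Set.disjoint_left.mpr fun y hy1 hy2 => absurd hy2.1 (not_le.mpr hy1.2)
    calc ∫ y in Set.Ioo (0:ℝ) R, H y
        ≤ ∫ y in Set.Ioo (0:ℝ) 1 ∪ Set.Ico (1:ℝ) R, H y := by
          apply setIntegral_mono_set hHint
          · exact (ae_restrict_iff' (measurableSet_Ioo.union measurableSet_Ico)).mpr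
              (ae_of_all _ hHnonneg)
          · exact HasSubset.Subset.eventuallyLE hsub
      _ = _ := setIntegral_union hdisj measurableSet_Ico
            (hHint.mono_set Set.subset_union_left)
            (hHint.mono_set Set.subset_union_right)
  have h6 : ∫ y in Set.Ioo (0:ℝ) 1, H y ≤ 1 := by
    have hb : ∀ y ∈ Set.Ioo (0:ℝ) 1, H y ≤ 1 := by
      intro y hy
      rw [hHd]
      have h1 : y ^ (n - 1) ≤ 1 := pow_le_one₀ hy.1.le hy.2.le
      have h2 : (1 + bubbleC n * y ^ 2) ^ (-e) ≤ 1 :=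
        Real.rpow_le_one_of_one_le_of_nonpos (le_add_of_nonneg_right (by positivity)) (by linarith)
      have h3 : (0:ℝ) ≤ (1 + bubbleC n * y ^ 2) ^ (-e) := Real.rpow_nonneg (by positivity) _
      calc y ^ (n - 1) * (1 + bubbleC n * y ^ 2) ^ (-e)
          ≤ 1 * 1 := mul_le_mul h1 h2 h3 zero_le_one
        _ = 1 := mul_one 1
    calc ∫ y in Set.Ioo (0:ℝ) 1, H y ≤ ∫ _y in Set.Ioo (0:ℝ) 1, (1:ℝ) := by
          apply setIntegral_mono_on (hHint.mono_set Set.subset_union_left)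
            ((integrableOn_const_iff).mpr (Or.inr (by simp [Real.volume_Ioo])))
            measurableSet_Ioo hb
      _ = 1 := by simp [Real.volume_Ioo]
  have h7 : ∫ y in Set.Ico (1:ℝ) R, H y ≤ (bubbleC n) ^ (-e) * ((1 + R ^ β) / |β|) := by
    have hptw : ∀ y ∈ Set.Ioc (1:ℝ) R, H y ≤ (bubbleC n) ^ (-e) * y ^ (β - 1) := by
      intro y hy
      have hy0 : (0:ℝ) < y := lt_trans one_pos hy.1
      have h2e : ((1:ℝ) + bubbleC n * y ^ 2) ^ (-e) ≤ (bubbleC n * y ^ 2) ^ (-e) :=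
        Real.rpow_le_rpow_of_nonpos (by positivity) (by linarith) (by linarith)
      have hcy : (bubbleC n * y ^ 2) ^ (-e) = (bubbleC n) ^ (-e) * (y ^ 2) ^ (-e) :=
        Real.mul_rpow hc.le (by positivity)
      have hyy : (y : ℝ) ^ (n - 1) * (y ^ 2) ^ (-e) = y ^ (β - 1) := by
        rw [← Real.rpow_natCast y (n - 1), ← Real.rpow_natCast y 2,
          ← Real.rpow_mul hy0.le, ← Real.rpow_add hy0]
        congr 1
        push_cast [Nat.cast_sub (by omega : 1 ≤ n)]
        rw [hβd]
        ring
      calc H y = y ^ (n - 1) * (1 + bubbleC n * y ^ 2) ^ (-e) := by rw [hHd]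
        _ ≤ y ^ (n - 1) * (bubbleC n * y ^ 2) ^ (-e) :=
            mul_le_mul_of_nonneg_left h2e (pow_nonneg hy0.le _)
        _ = (bubbleC n) ^ (-e) * (y ^ (n - 1) * (y ^ 2) ^ (-e)) := by rw [hcy]; ring
        _ = (bubbleC n) ^ (-e) * y ^ (β - 1) := by rw [hyy]
    have hrint : IntegrableOn (fun y : ℝ => y ^ (β - 1)) (Set.Ioc (1:ℝ) R) volume := by
      have hcont : ContinuousOn (fun y : ℝ => y ^ (β - 1)) (Set.Icc (1:ℝ) R) := by
        apply ContinuousOn.rpow_const continuousOn_id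
        intro y hy
        exact Or.inl (ne_of_gt (lt_of_lt_of_le one_pos hy.1))
      exact (hcont.integrableOn_compact isCompact_Icc).mono_set Set.Ioc_subset_Icc_self
    calc ∫ y in Set.Ico (1:ℝ) R, H y = ∫ y in Set.Ioc (1:ℝ) R, H y := by
          rw [integral_Ico_eq_integral_Ioo, ← integral_Ioc_eq_integral_Ioo]
      _ ≤ ∫ y in Set.Ioc (1:ℝ) R, (bubbleC n) ^ (-e) * y ^ (β - 1) := by
          have hHIoc : IntegrableOn H (Set.Ioc (1:ℝ) R) volume :=
            (hHc.continuousOn.integrableOn_compact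
              (isCompact_Icc (a:=(1:ℝ)) (b:=R))).mono_set Set.Ioc_subset_Icc_self
          exact setIntegral_mono_on hHIoc (hrint.const_mul _) measurableSet_Ioc hptw
      _ = (bubbleC n) ^ (-e) * ∫ y in Set.Ioc (1:ℝ) R, y ^ (β - 1) := by
          rw [integral_const_mul]
      _ = (bubbleC n) ^ (-e) * ∫ y in (1:ℝ)..R, y ^ (β - 1) := by
          rw [intervalIntegral.integral_of_le hR1]
      _ ≤ (bubbleC n) ^ (-e) * ((1 + R ^ β) / |β|) := by
          apply mul_le_mul_of_nonneg_left (aux_rpow_integral hβne hR1)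
            (Real.rpow_nonneg hc.le _)
  -- assemble
  have hIb : ∫ x in Metric.ball (0:EuclideanSpace ℝ (Fin n)) R ∩ upperHalf n, g x ≤ K * (1 + R ^ β) := by
    have hc0 : 0 ≤ (bubbleC n) ^ (-e) := Real.rpow_nonneg hc.le _
    have hsplit : (bubbleC n) ^ (-e) * ((1 + R ^ β) / |β|) =
        (bubbleC n) ^ (-e) / |β| + ((bubbleC n) ^ (-e) / |β|) * R ^ β := by
      field_simp
    have hD0 : 0 ≤ (bubbleC n) ^ (-e) / |β| := div_nonneg hc0 habs.le
    calc ∫ x in Metric.ball (0:EuclideanSpace ℝ (Fin n)) R ∩ upperHalf n, g x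
        ≤ ∫ x in Metric.ball (0:EuclideanSpace ℝ (Fin n)) R, g x := h1
      _ = V * ∫ y in Set.Ioo (0:ℝ) R, H y := h23
      _ ≤ V * (1 + (bubbleC n) ^ (-e) * ((1 + R ^ β) / |β|)) := by
          apply mul_le_mul_of_nonneg_left _ hV0
          linarith [h5, h6, h7]
      _ ≤ K * (1 + R ^ β) := by
          rw [hsplit, hKd]
          nlinarith [mul_nonneg hV0 hRb0.le, mul_nonneg (mul_nonneg hV0 hD0) hRb0.le,
            mul_nonneg hV0 hD0]
  have hI0 : 0 ≤ ∫ x in Metric.ball (0:EuclideanSpace ℝ (Fin n)) R ∩ upperHalf n, g x :=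
    setIntegral_nonneg (measurableSet_ball.inter hmU) fun x _ => hg0 x
  -- final computation
  have hRμ : R ^ (β * s) = μ ^ α := by
    rw [hRd, one_div, ← Real.rpow_neg_one μ, ← Real.rpow_mul hμ0.le, ← hexp]
    ring_nf
  simp only [hgeq]
  calc (∫ x in Metric.ball (0:EuclideanSpace ℝ (Fin n)) R ∩ upperHalf n, g x) ^ s
      ≤ (K * (1 + R ^ β)) ^ s := Real.rpow_le_rpow hI0 hIb hs0.le
    _ = K ^ s * (1 + R ^ β) ^ s := Real.mul_rpow hK0.le (by positivity)
    _ ≤ K ^ s * (1 + (R ^ β) ^ s) :=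
        mul_le_mul_of_nonneg_left (aux_add_rpow hRb0.le hs0.le hs1)
          (Real.rpow_nonneg hK0.le s)
    _ = K ^ s * (1 + μ ^ α) := by
        rw [← Real.rpow_mul hR0.le, hRμ]
end
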